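/- arXiv:1807.06864 — 4 statements merged into one kernel-verified Lean document; each statement's English description precedes it below -/
import Mathlib

section
/- Let (A_1, …, A_n) and (B_1, …, B_n) be commuting n-tuples of real orthogonal k×k matrices. If there exists a complex unitary matrix U ∈ U(k) with U⁻¹ A_j U = B_j for all j = 1, …, n (where real matrices are regarded as complex matrices via ℝ ⊆ ℂ), then there exists a real orthogonal matrix Q ∈ O(k) with Q⁻¹ A_j Q = B_j for all j = 1, …, n. -/
open Matrix Polynomial

private lemma exists_real_intertwiner {n k : ℕ} (A B : Fin n → Matrix (Fin k) (Fin k) ℝ)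
    (U : Matrix (Fin k) (Fin k) ℂ) (hUdet : U.det ≠ 0)
    (h : ∀ j, (A j).map (fun x => (x : ℂ)) * U = U * (B j).map (fun x => (x : ℂ))) :
    ∃ S : Matrix (Fin k) (Fin k) ℝ, IsUnit S.det ∧ ∀ j, A j * S = S * B j := by
  set X : Matrix (Fin k) (Fin k) ℝ := Matrix.of fun i j => (U i j).re with hXdef
  set Y : Matrix (Fin k) (Fin k) ℝ := Matrix.of fun i j => (U i j).im with hYdef
  have hAX : ∀ j, A j * X = X * B j := by
    intro j
    ext i l
    have h0 := congrFun (congrFun (congrArg (fun M => M) (h j)) i) l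
    simp only [Matrix.mul_apply, Matrix.map_apply] at h0
    have hre := congrArg Complex.re h0
    simp only [Complex.re_sum, Complex.mul_re, Complex.ofReal_re, Complex.ofReal_im,
      zero_mul, sub_zero, mul_zero] at hre
    simpa [Matrix.mul_apply, X] using hre
  have hAY : ∀ j, A j * Y = Y * B j := by
    intro j
    ext i l
    have h0 := congrFun (congrFun (congrArg (fun M => M) (h j)) i) l
    simp only [Matrix.mul_apply, Matrix.map_apply] at h0
    have him := congrArg Complex.im h0
    simp only [Complex.im_sum, Complex.mul_im, Complex.ofReal_re, Complex.ofReal_im,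
      zero_mul, mul_zero, add_zero, zero_add] at him
    simpa [Matrix.mul_apply, Y] using him
  set M : Matrix (Fin k) (Fin k) ℝ[X] :=
    Matrix.of fun i j => C (X i j) + Polynomial.X * C (Y i j) with hMdef
  have hdet : Polynomial.aeval Complex.I M.det = U.det := by
    rw [AlgHom.map_det]
    congr 1
    ext i j
    simp only [hMdef, Matrix.map_apply, Matrix.of_apply, map_add, _root_.map_mul, aeval_C, aeval_X,
      Complex.coe_algebraMap]
    apply Complex.ext <;> simp [X, Y]
  have hM : M.det ≠ 0 := fun h0 => hUdet (by rw [← hdet, h0, map_zero])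
  obtain ⟨t, ht⟩ : ∃ t : ℝ, ¬ M.det.IsRoot t := by
    obtain ⟨t, ht⟩ := (Polynomial.finite_setOf_isRoot hM).infinite_compl.nonempty
    exact ⟨t, ht⟩
  refine ⟨X + t • Y, ?_, fun j => ?_⟩
  · have hev : (X + t • Y).det = M.det.eval t := by
      rw [show M.det.eval t = (Polynomial.evalRingHom t) M.det from rfl, RingHom.map_det]
      congr 1
      ext i j
      simp only [hMdef, RingHom.mapMatrix_apply, Matrix.map_apply, Matrix.of_apply, coe_evalRingHom, eval_add, eval_mul, eval_C, eval_X, Matrix.add_apply, Matrix.smul_apply, smul_eq_mul]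
    rw [hev]
    exact isUnit_iff_ne_zero.mpr ht
  · rw [mul_add, add_mul, hAX, Matrix.mul_smul, Matrix.smul_mul, hAY]

/-- If two commuting `n`-tuples of real orthogonal `k × k` matrices are simultaneously
conjugate by a complex unitary matrix (regarding real matrices as complex matrices via
`ℝ ⊆ ℂ`), then they are simultaneously conjugate by a real orthogonal matrix. -/
theorem orthogonal_tuples_unitarily_conjugate_implies_orthogonally_conjugate
    (n k : ℕ) (A B : Fin n → Matrix (Fin k) (Fin k) ℝ)
    (hA : ∀ j, A j ∈ Matrix.orthogonalGroup (Fin k) ℝ)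
    (hB : ∀ j, B j ∈ Matrix.orthogonalGroup (Fin k) ℝ)
    (hcommA : ∀ i j, A i * A j = A j * A i)
    (hcommB : ∀ i j, B i * B j = B j * B i)
    (hU : ∃ U ∈ Matrix.unitaryGroup (Fin k) ℂ,
      ∀ j, U⁻¹ * (A j).map (fun x => (x : ℂ)) * U = (B j).map (fun x => (x : ℂ))) :
    ∃ Q ∈ Matrix.orthogonalGroup (Fin k) ℝ, ∀ j, Q⁻¹ * A j * Q = B j := by
  obtain ⟨U, hUmem, hUconj⟩ := hU
  have hU1 : U * star U = 1 := Matrix.mem_unitaryGroup_iff.mp hUmem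
  have hU1' : star U * U = 1 := Matrix.mem_unitaryGroup_iff'.mp hUmem
  have hUinv : U⁻¹ = star U := Matrix.inv_eq_left_inv hU1'
  have hUdet : U.det ≠ 0 := by
    have := congrArg Matrix.det hU1
    rw [Matrix.det_mul, Matrix.det_one] at this
    exact left_ne_zero_of_mul_eq_one this
  have hconj : ∀ j, (A j).map (fun x => (x : ℂ)) * U = U * (B j).map (fun x => (x : ℂ)) := by
    intro j
    have h0 := hUconj j
    rw [hUinv] at h0
    calc (A j).map (fun x => (x : ℂ)) * U
        = U * (star U * (A j).map (fun x => (x : ℂ)) * U) := by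
          rw [← mul_assoc, ← mul_assoc, hU1, one_mul]
      _ = U * (B j).map (fun x => (x : ℂ)) := by rw [h0]
  obtain ⟨S, hSdet, hS⟩ := exists_real_intertwiner A B U hUdet hconj
  have hAo : ∀ j, A j * star (A j) = 1 := fun j => (Matrix.mem_orthogonalGroup_iff (Fin k) ℝ).mp (hA j)
  have hAo' : ∀ j, star (A j) * A j = 1 := fun j => (Matrix.mem_orthogonalGroup_iff' (Fin k) ℝ).mp (hA j)
  have hBo : ∀ j, B j * star (B j) = 1 := fun j => (Matrix.mem_orthogonalGroup_iff (Fin k) ℝ).mp (hB j)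
  have hBo' : ∀ j, star (B j) * B j = 1 := fun j => (Matrix.mem_orthogonalGroup_iff' (Fin k) ℝ).mp (hB j)
  -- the key intertwining relation for the adjoint
  have key : ∀ j, B j * star S = star S * A j := by
    intro j
    have e : star S * star (A j) = star (B j) * star S := by
      simpa [Matrix.star_mul] using congrArg star (hS j)
    calc B j * star S = B j * (star S * (star (A j) * A j)) := by rw [hAo', mul_one]
      _ = B j * (star S * star (A j)) * A j := by simp only [mul_assoc]
      _ = B j * (star (B j) * star S) * A j := by rw [e]
      _ = (B j * star (B j)) * (star S * A j) := by simp only [mul_assoc]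
      _ = star S * A j := by rw [hBo, one_mul]
  set G : Matrix (Fin k) (Fin k) ℝ := star S * S with hGdef
  have hG : G.PosSemidef := Matrix.posSemidef_conjTranspose_mul_self S
  have hGB : ∀ j, B j * G = G * B j := by
    intro j
    calc B j * (star S * S) = (B j * star S) * S := by rw [mul_assoc]
      _ = (star S * A j) * S := by rw [key]
      _ = star S * (A j * S) := by rw [mul_assoc]
      _ = star S * (S * B j) := by rw [hS]
      _ = (star S * S) * B j := by rw [mul_assoc]
  set P : Matrix (Fin k) (Fin k) ℝ := (open scoped MatrixOrder in CFC.sqrt G) with hPdef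
  have hP : P.PosSemidef := by open scoped MatrixOrder in exact (CFC.sqrt_nonneg G).posSemidef
  have hPP : P * P = G := by open scoped MatrixOrder in exact CFC.sqrt_mul_sqrt_self G hG.nonneg
  have hPstar : star P = P := hP.1
  have hGdet : IsUnit G.det := by
    rw [hGdef, Matrix.det_mul]
    have : (star S).det = S.det := by
      rw [Matrix.star_eq_conjTranspose, Matrix.det_conjTranspose, star_trivial]
    rw [this]
    exact hSdet.mul hSdet
  have hPdet : IsUnit P.det := by
    have : IsUnit (P.det * P.det) := by
      rw [← Matrix.det_mul, hPP]; exact hGdet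
    exact isUnit_of_mul_isUnit_left this
  have hPB : ∀ j, B j * P = P * B j := by
    intro j
    have hN : (B j * P * star (B j)).PosSemidef := by
      simpa [Matrix.star_eq_conjTranspose] using hP.mul_mul_conjTranspose_same (B j)
    have hNsq : (B j * P * star (B j)) ^ 2 = P ^ 2 := by
      calc (B j * P * star (B j)) ^ 2
          = B j * P * (star (B j) * B j) * P * star (B j) := by
            rw [pow_two]; simp only [mul_assoc]
        _ = B j * (P * P) * star (B j) := by rw [hBo']; simp only [mul_one, mul_assoc]
        _ = (B j * G) * star (B j) := by rw [hPP, mul_assoc]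
        _ = G * (B j * star (B j)) := by rw [hGB]; simp only [mul_assoc]
        _ = P ^ 2 := by rw [hBo, mul_one, pow_two, hPP]
    have hNP : B j * P * star (B j) = P := by open scoped MatrixOrder in exact (CFC.sq_eq_sq_iff _ P hN.nonneg hP.nonneg).mp hNsq
    calc B j * P = B j * P * (star (B j) * B j) := by rw [hBo', mul_one]
      _ = (B j * P * star (B j)) * B j := by simp only [mul_assoc]
      _ = P * B j := by rw [hNP]
  refine ⟨S * P⁻¹, ?_, ?_⟩
  · rw [Matrix.mem_orthogonalGroup_iff']
    have hstarQ : star (S * P⁻¹) = P⁻¹ * star S := by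
      rw [Matrix.star_mul]
      congr 1
      rw [Matrix.star_eq_conjTranspose, Matrix.conjTranspose_nonsing_inv,
        ← Matrix.star_eq_conjTranspose, hPstar]
    rw [← Matrix.conjTranspose_eq_transpose_of_trivial, ← Matrix.star_eq_conjTranspose, hstarQ]
    calc P⁻¹ * star S * (S * P⁻¹) = P⁻¹ * (star S * S) * P⁻¹ := by simp only [mul_assoc]
      _ = P⁻¹ * (P * P) * P⁻¹ := by rw [← hGdef, ← hPP]
      _ = (P⁻¹ * P) * (P * P⁻¹) := by simp only [mul_assoc]
      _ = 1 := by rw [Matrix.nonsing_inv_mul _ hPdet, Matrix.mul_nonsing_inv _ hPdet, one_mul]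
  · intro j
    have hPBinv : B j * P⁻¹ = P⁻¹ * B j := by
      calc B j * P⁻¹ = P⁻¹ * (P * B j) * P⁻¹ := by
            rw [← mul_assoc, Matrix.nonsing_inv_mul _ hPdet, one_mul]
        _ = P⁻¹ * (B j * P) * P⁻¹ := by rw [hPB]
        _ = P⁻¹ * B j * (P * P⁻¹) := by simp only [mul_assoc]
        _ = P⁻¹ * B j := by rw [Matrix.mul_nonsing_inv _ hPdet, mul_one]
    have hQdet : IsUnit (S * P⁻¹).det := by
      rw [Matrix.det_mul]
      exact hSdet.mul (Matrix.isUnit_nonsing_inv_det P hPdet)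
    have hAQ : A j * (S * P⁻¹) = (S * P⁻¹) * B j := by
      calc A j * (S * P⁻¹) = (A j * S) * P⁻¹ := by rw [mul_assoc]
        _ = (S * B j) * P⁻¹ := by rw [hS]
        _ = S * (B j * P⁻¹) := by rw [mul_assoc]
        _ = S * (P⁻¹ * B j) := by rw [hPBinv]
        _ = (S * P⁻¹) * B j := by rw [mul_assoc]
    rw [mul_assoc, hAQ, ← mul_assoc, Matrix.nonsing_inv_mul _ hQdet, one_mul]
end

section
/- Let (A_1, …, A_n) be a commuting n-tuple of unitary k×k complex matrices, and suppose there exists a unitary matrix V ∈ U(k) such that V⁻¹ A_j V = conj(A_j) for all j = 1, …, n, where conj(A_j) denotes the entrywise complex conjugate matrix. Then there exists a unitary matrix W ∈ U(k) such that every matrix W⁻¹ A_j W has real entries (and hence is a real orthogonal matrix). -/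
open Finset in
lemma exists_involution_matching {α β : Type*} [Fintype α] [DecidableEq α] [DecidableEq β]
    (f : α → β) (g : β → β) (hg : ∀ b, g (g b) = b) (σ : Equiv.Perm α)
    (hσ : ∀ a, f (σ a) = g (f a)) :
    ∃ τ : α → α, (∀ a, τ (τ a) = a) ∧ (∀ a, f (τ a) = g (f a)) := by
  classical
  have ginj : Function.Injective g := Function.LeftInverse.injective hg
  have key : ∀ s : Finset α,
      (∀ b, (s.filter fun a => f a = b).card = (s.filter fun a => f a = g b).card) →
      ∃ τ : α → α, (∀ a, τ (τ a) = a) ∧ (∀ a ∈ s, τ a ∈ s ∧ f (τ a) = g (f a)) ∧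
        (∀ a ∉ s, τ a = a) := by
    intro s
    induction s using Finset.strongInduction with
    | _ s ih =>
      intro hcard
      rcases eq_or_ne s ∅ with rfl | hne
      · exact ⟨id, fun a => rfl, fun a ha => absurd ha (notMem_empty a), fun _ _ => rfl⟩
      obtain ⟨a, ha⟩ := nonempty_iff_ne_empty.mpr hne
      by_cases hgb : g (f a) = f a
      · -- case A : pattern self-conjugate, pair a with itself
        have hsub : s.erase a ⊂ s := erase_ssubset ha
        have hunion : s.erase a ∪ {a} = s := by
          ext x
          simp only [mem_union, mem_erase, mem_singleton]
          constructor
          · rintro (⟨_, h⟩ | rfl) <;> [exact h; exact ha]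
          · intro hx; rcases eq_or_ne x a with rfl | hxa
            · exact Or.inr rfl
            · exact Or.inl ⟨hxa, hx⟩
        have hdisj : Disjoint (s.erase a) ({a} : Finset α) := by
          simp [Finset.disjoint_singleton_right]
        have hdecomp : ∀ c, (s.filter fun x => f x = c).card =
            ((s.erase a).filter fun x => f x = c).card + (if f a = c then 1 else 0) := by
          intro c
          calc (s.filter fun x => f x = c).card
              = ((s.erase a ∪ {a}).filter fun x => f x = c).card := by rw [hunion]
            _ = ((s.erase a).filter fun x => f x = c).card +
                (({a} : Finset α).filter fun x => f x = c).card := by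
                rw [filter_union, card_union_of_disjoint (disjoint_filter_filter hdisj)]
            _ = ((s.erase a).filter fun x => f x = c).card + (if f a = c then 1 else 0) := by
                rw [filter_singleton]
                by_cases h : f a = c
                · rw [if_pos h, if_pos h, card_singleton]
                · rw [if_neg h, if_neg h, card_empty]
        have hcard' : ∀ c, ((s.erase a).filter fun x => f x = c).card =
            ((s.erase a).filter fun x => f x = g c).card := by
          intro c
          have h1 := hcard c
          rw [hdecomp c, hdecomp (g c)] at h1
          have he : (if f a = c then 1 else 0) = (if f a = g c then 1 else 0) := by
            by_cases h : f a = c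
            · rw [if_pos h, if_pos (show f a = g c by rw [← h]; exact hgb.symm)]
            · have h' : ¬ f a = g c := by
                intro hc
                have h2 := congrArg g hc
                rw [hg, hgb] at h2
                exact h h2
              rw [if_neg h, if_neg h']
          omega
        obtain ⟨τ', hτ'1, hτ'2, hτ'3⟩ := ih _ hsub hcard'
        refine ⟨Function.update τ' a a, ?_, ?_, ?_⟩
        · intro x
          rcases eq_or_ne x a with rfl | hx
          · rw [Function.update_self, Function.update_self]
          · rw [Function.update_of_ne hx]
            by_cases hxs : x ∈ s.erase a
            · have h1 := (hτ'2 x hxs).1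
              have hne' : τ' x ≠ a := by
                intro h
                rw [h] at h1
                exact (mem_erase.mp h1).1 rfl
              rw [Function.update_of_ne hne', hτ'1]
            · rw [hτ'3 x hxs, Function.update_of_ne hx, hτ'3 x hxs]
        · intro x hxs
          rcases eq_or_ne x a with rfl | hx
          · rw [Function.update_self]
            exact ⟨hxs, hgb.symm⟩
          · rw [Function.update_of_ne hx]
            have hxe : x ∈ s.erase a := mem_erase.mpr ⟨hx, hxs⟩
            exact ⟨mem_of_mem_erase (hτ'2 x hxe).1, (hτ'2 x hxe).2⟩
        · intro x hxs
          have hx : x ≠ a := fun h => hxs (h ▸ ha)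
          rw [Function.update_of_ne hx, hτ'3 x (fun h => hxs (mem_of_mem_erase h))]
      · -- case B : pair a with some a' with f a' = g (f a)
        have hpos : 0 < ((s.filter fun x => f x = g (f a)).card) := by
          rw [← hcard (f a)]
          exact card_pos.mpr ⟨a, mem_filter.mpr ⟨ha, rfl⟩⟩
        obtain ⟨a', ha'⟩ := card_pos.mp hpos
        obtain ⟨ha's, ha'f⟩ := mem_filter.mp ha'
        have hane : a' ≠ a := fun h => hgb (by rw [← ha'f, h])
        have hane' : a ≠ a' := Ne.symm hane
        set s'' := (s.erase a).erase a' with hs''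
        have hmem'' : ∀ x, x ∈ s'' ↔ x ∈ s ∧ x ≠ a ∧ x ≠ a' := by
          intro x
          simp only [hs'', mem_erase]
          tauto
        have hsub : s'' ⊂ s := by
          constructor
          · intro x hx; exact ((hmem'' x).mp hx).1
          · intro hcon
            have := (hmem'' a).mp (hcon ha)
            exact this.2.1 rfl
        have hunion : s'' ∪ {a, a'} = s := by
          ext x
          simp only [mem_union, mem_insert, mem_singleton, hmem'']
          constructor
          · rintro (⟨h, _⟩ | rfl | rfl) <;> [exact h; exact ha; exact ha's]
          · intro hx
            rcases eq_or_ne x a with rfl | h1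
            · exact Or.inr (Or.inl rfl)
            rcases eq_or_ne x a' with rfl | h2
            · exact Or.inr (Or.inr rfl)
            · exact Or.inl ⟨hx, h1, h2⟩
        have hdisj : Disjoint s'' ({a, a'} : Finset α) := by
          rw [Finset.disjoint_right]
          intro x hx hx'
          rcases mem_insert.mp hx with rfl | hx2
          · exact ((hmem'' x).mp hx').2.1 rfl
          · exact ((hmem'' x).mp hx').2.2 (mem_singleton.mp hx2)
        have hnm : a ∉ ({a'} : Finset α) := fun h => hane' (mem_singleton.mp h)
        have hpair : ∀ c, (({a, a'} : Finset α).filter fun x => f x = c).card =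
            (if f a = c then 1 else 0) + (if g (f a) = c then 1 else 0) := by
          intro c
          have hgc : (g (f a) = c) = (f a' = c) := by rw [ha'f]
          rw [filter_insert, filter_singleton]
          simp only [hgc]
          by_cases h1 : f a = c <;> by_cases h2 : f a' = c <;>
            simp [h1, h2, hnm, Finset.card_insert_of_notMem]
        have hdecomp : ∀ c, (s.filter fun x => f x = c).card =
            (s''.filter fun x => f x = c).card +
              ((if f a = c then 1 else 0) + (if g (f a) = c then 1 else 0)) := by
          intro c
          calc (s.filter fun x => f x = c).card
              = ((s'' ∪ {a, a'}).filter fun x => f x = c).card := by rw [hunion]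
            _ = (s''.filter fun x => f x = c).card +
                (({a, a'} : Finset α).filter fun x => f x = c).card := by
                rw [filter_union, card_union_of_disjoint (disjoint_filter_filter hdisj)]
            _ = _ := by rw [hpair]
        have hcard'' : ∀ c, (s''.filter fun x => f x = c).card =
            (s''.filter fun x => f x = g c).card := by
          intro c
          have h1 := hcard c
          rw [hdecomp c, hdecomp (g c)] at h1
          have e1 : (if f a = c then 1 else 0) = (if g (f a) = g c then 1 else 0) := by
            by_cases h : f a = c
            · rw [if_pos h, if_pos (congrArg g h)]
            · rw [if_neg h, if_neg (fun hh => h (ginj hh))]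
          have e2 : (if g (f a) = c then 1 else 0) = (if f a = g c then 1 else 0) := by
            by_cases h : g (f a) = c
            · rw [if_pos h, if_pos (show f a = g c by rw [← h, hg])]
            · rw [if_neg h, if_neg (show ¬ f a = g c from fun hh => h (by rw [hh, hg]))]
          omega
        obtain ⟨τ'', hτ1, hτ2, hτ3⟩ := ih _ hsub hcard''
        refine ⟨Function.update (Function.update τ'' a a') a' a, ?_, ?_, ?_⟩
        · intro x
          rcases eq_or_ne x a' with rfl | hx2
          · rw [Function.update_self, Function.update_of_ne hane', Function.update_self]
          rcases eq_or_ne x a with rfl | hx1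
          · rw [Function.update_of_ne hane', Function.update_self, Function.update_self]
          · rw [Function.update_of_ne hx2, Function.update_of_ne hx1]
            by_cases hxs : x ∈ s''
            · have h1 := (hτ2 x hxs).1
              have hne1 : τ'' x ≠ a := by
                intro h; rw [h] at h1; exact ((hmem'' a).mp h1).2.1 rfl
              have hne2 : τ'' x ≠ a' := by
                intro h; rw [h] at h1; exact ((hmem'' a').mp h1).2.2 rfl
              rw [Function.update_of_ne hne2, Function.update_of_ne hne1, hτ1]
            · rw [hτ3 x hxs, Function.update_of_ne hx2, Function.update_of_ne hx1,
                hτ3 x hxs]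
        · intro x hxs
          rcases eq_or_ne x a' with rfl | hx2
          · rw [Function.update_self]
            refine ⟨ha, ?_⟩
            rw [ha'f, hg]
          rcases eq_or_ne x a with rfl | hx1
          · rw [Function.update_of_ne hane', Function.update_self]
            exact ⟨ha's, ha'f⟩
          · rw [Function.update_of_ne hx2, Function.update_of_ne hx1]
            have hxe : x ∈ s'' := (hmem'' x).mpr ⟨hxs, hx1, hx2⟩
            exact ⟨((hmem'' _).mp (hτ2 x hxe).1).1, (hτ2 x hxe).2⟩
        · intro x hxs
          have hx1 : x ≠ a := fun h => hxs (h ▸ ha)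
          have hx2 : x ≠ a' := fun h => hxs (h ▸ ha's)
          rw [Function.update_of_ne hx2, Function.update_of_ne hx1,
            hτ3 x (fun h => hxs ((hmem'' x).mp h).1)]
  have hcarduniv : ∀ c, ((Finset.univ : Finset α).filter fun x => f x = c).card =
      ((Finset.univ : Finset α).filter fun x => f x = g c).card := by
    intro c
    apply Finset.card_bij (fun x _ => σ x)
    · intro x hx
      simp only [mem_filter, mem_univ, true_and] at hx ⊢
      rw [hσ, hx]
    · intro x _ y _ h
      exact σ.injective h
    · intro y hy
      simp only [mem_filter, mem_univ, true_and] at hy ⊢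
      refine ⟨σ.symm y, ?_, by simp⟩
      have h2 := hσ (σ.symm y)
      rw [Equiv.apply_symm_apply, hy] at h2
      exact (ginj h2).symm
  obtain ⟨τ, h1, h2, _⟩ := key Finset.univ hcarduniv
  exact ⟨τ, h1, fun a => (h2 a (mem_univ a)).2⟩


set_option maxHeartbeats 1600000 in
open Matrix in
lemma exists_unitary_simultaneous_diag (n k : ℕ) (A : Fin n → Matrix (Fin k) (Fin k) ℂ)
    (hA : ∀ j, A j ∈ Matrix.unitaryGroup (Fin k) ℂ)
    (hcomm : ∀ i j, A i * A j = A j * A i) :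
    ∃ U ∈ Matrix.unitaryGroup (Fin k) ℂ, ∃ d : Fin n → Fin k → ℂ,
      ∀ j, A j * U = U * Matrix.diagonal (d j) := by
  classical
  -- commutation of the A's and their adjoints
  have hstar : ∀ j, (A j)ᴴ * A j = 1 := fun j => by
    simpa [Matrix.star_eq_conjTranspose] using (Unitary.mem_iff.mp (hA j)).1
  have hstar' : ∀ j, A j * (A j)ᴴ = 1 := fun j => by
    simpa [Matrix.star_eq_conjTranspose] using (Unitary.mem_iff.mp (hA j)).2
  have hcomm2 : ∀ i j, A i * (A j)ᴴ = (A j)ᴴ * A i := by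
    intro i j
    calc A i * (A j)ᴴ = ((A j)ᴴ * A j) * (A i * (A j)ᴴ) := by rw [hstar, one_mul]
      _ = (A j)ᴴ * (A j * A i) * (A j)ᴴ := by noncomm_ring
      _ = (A j)ᴴ * (A i * A j) * (A j)ᴴ := by rw [hcomm]
      _ = ((A j)ᴴ * A i) * (A j * (A j)ᴴ) := by noncomm_ring
      _ = (A j)ᴴ * A i := by rw [hstar', mul_one]
  have hcomm3 : ∀ i j, (A i)ᴴ * (A j)ᴴ = (A j)ᴴ * (A i)ᴴ := by
    intro i j
    have := congrArg Matrix.conjTranspose (hcomm j i)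
    simpa [Matrix.conjTranspose_mul] using this
  -- the Hermitian real and imaginary parts
  set M : Fin n × Bool → Matrix (Fin k) (Fin k) ℂ := fun p =>
    if p.2 then (2 * Complex.I)⁻¹ • (A p.1 - (A p.1)ᴴ) else (2 : ℂ)⁻¹ • (A p.1 + (A p.1)ᴴ)
    with hM
  have hMherm : ∀ p, (M p).IsHermitian := by
    intro p
    rcases p with ⟨j, b⟩
    cases b <;>
      simp only [hM, Matrix.IsHermitian, Matrix.conjTranspose_smul,
        Matrix.conjTranspose_add, Matrix.conjTranspose_sub, Matrix.conjTranspose_conjTranspose,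
        if_true, if_false, Bool.false_eq_true]
    · have h2 : (star (2:ℂ)⁻¹) = (2:ℂ)⁻¹ := by
        simp
      rw [h2, add_comm]
    · have h2 : (star ((2 * Complex.I)⁻¹) : ℂ) = -(2*Complex.I)⁻¹ := by
        rw [← inv_neg]
        congr 1
        simp [Complex.ext_iff]
      rw [h2, neg_smul, ← smul_neg, neg_sub]
  have hMcomm : ∀ p q, M p * M q = M q * M p := by
    intro p q
    rcases p with ⟨i, bi⟩; rcases q with ⟨j, bj⟩
    have base : ∀ (X Y : Matrix (Fin k) (Fin k) ℂ), (X = A i ∨ X = (A i)ᴴ) →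
        (Y = A j ∨ Y = (A j)ᴴ) → X * Y = Y * X := by
      rintro X Y (rfl | rfl) (rfl | rfl)
      · exact hcomm i j
      · exact hcomm2 i j
      · exact (hcomm2 j i).symm
      · exact hcomm3 i j
    have h1 := base (A i) (A j) (Or.inl rfl) (Or.inl rfl)
    have h2 := base (A i) ((A j)ᴴ) (Or.inl rfl) (Or.inr rfl)
    have h3 := base ((A i)ᴴ) (A j) (Or.inr rfl) (Or.inl rfl)
    have h4 := base ((A i)ᴴ) ((A j)ᴴ) (Or.inr rfl) (Or.inr rfl)
    cases bi <;> cases bj <;>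
      simp only [hM, if_true, if_false, Bool.false_eq_true, Matrix.smul_mul, Matrix.mul_smul,
        Matrix.add_mul, Matrix.mul_add, Matrix.sub_mul, Matrix.mul_sub] <;>
      rw [h1, h2, h3, h4] <;> module
  -- pass to linear maps on Euclidean space
  set T : Fin n × Bool → (EuclideanSpace ℂ (Fin k) →ₗ[ℂ] EuclideanSpace ℂ (Fin k)) :=
    fun p => Matrix.toEuclideanLin (M p) with hT
  have htimes : ∀ X Y : Matrix (Fin k) (Fin k) ℂ,
      Matrix.toEuclideanLin X * Matrix.toEuclideanLin Y = Matrix.toEuclideanLin (X * Y) := by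
    intro X Y
    apply LinearMap.ext
    intro v
    simp [Matrix.toEuclideanLin_apply, Matrix.mulVec_mulVec, Module.End.mul_apply]
  have hTsym : ∀ p, (T p).IsSymmetric := fun p =>
    Matrix.isHermitian_iff_isSymmetric.mp (hMherm p)
  have hTcomm : Pairwise (Function.onFun Commute T) := by
    intro p q _
    show T p * T q = T q * T p
    simp only [hT]
    rw [htimes, htimes, hMcomm]
  have htop := LinearMap.IsSymmetric.iSup_iInf_eq_top_of_commute hTsym hTcomm
  have hOrth := LinearMap.IsSymmetric.orthogonalFamily_iInf_eigenspaces hTsym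
  set V : ((Fin n × Bool) → ℂ) → Submodule ℂ (EuclideanSpace ℂ (Fin k)) :=
    fun χ => ⨅ i, Module.End.eigenspace (T i) (χ i) with hV
  have hIndep : iSupIndep V := hOrth.independent
  letI : Fintype {χ // V χ ≠ ⊥} := hIndep.fintypeNeBotOfFiniteDimensional
  have hOrth'' := hOrth.comp
    (f := (Subtype.val : {χ // V χ ≠ ⊥} → ((Fin n × Bool) → ℂ))) Subtype.coe_injective
  have hsup : ⨆ s : {χ // V χ ≠ ⊥}, V s.1 = ⊤ := by
    have h1 : (⨆ s : {χ // V χ ≠ ⊥}, V s.1) ≤ ⨆ χ, V χ :=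
      iSup_le fun s => le_iSup V s.1
    have h2 : (⨆ χ, V χ) ≤ ⨆ s : {χ // V χ ≠ ⊥}, V s.1 := by
      refine iSup_le fun χ => ?_
      by_cases h : V χ = ⊥
      · rw [h]; exact bot_le
      · exact le_iSup (fun s : {χ // V χ ≠ ⊥} => V s.1) ⟨χ, h⟩
    rw [← htop]
    exact le_antisymm h1 h2
  have hInternal : DirectSum.IsInternal (fun s : {χ // V χ ≠ ⊥} => (V s.1 : Submodule ℂ _)) :=
    hOrth''.isInternal_iff.mpr (by rw [hsup, Submodule.top_orthogonal_eq_bot])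
  have hn : Module.finrank ℂ (EuclideanSpace ℂ (Fin k)) = k := finrank_euclideanSpace_fin
  set b := hInternal.subordinateOrthonormalBasis hn hOrth'' with hbdef
  set idx : Fin k → {χ // V χ ≠ ⊥} :=
    fun p => hInternal.subordinateOrthonormalBasisIndex hn p hOrth'' with hidx
  have hmem : ∀ p, b p ∈ V (idx p).1 :=
    fun p => hInternal.subordinateOrthonormalBasis_subordinate hn p hOrth''
  have heig : ∀ p i, T i (b p) = ((idx p).1 i) • b p := by
    intro p i
    have := (Submodule.mem_iInf _).mp (hmem p) i
    exact Module.End.mem_eigenspace_iff.mp this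
  -- the claimed diagonal entries
  set d : Fin n → Fin k → ℂ :=
    fun j p => (idx p).1 (j, false) + Complex.I * (idx p).1 (j, true) with hd
  have hAHK : ∀ j, A j = M (j, false) + Complex.I • M (j, true) := by
    intro j
    show A j = (2:ℂ)⁻¹ • (A j + (A j)ᴴ) + Complex.I • ((2 * Complex.I)⁻¹ • (A j - (A j)ᴴ))
    have hI : Complex.I ≠ 0 := Complex.I_ne_zero
    match_scalars <;> field_simp <;> ring
  have hvec : ∀ j p, Matrix.toEuclideanLin (A j) (b p) = d j p • b p := by
    intro j p
    rw [hAHK j, map_add, _root_.map_smul, LinearMap.add_apply, LinearMap.smul_apply]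
    have h1 : Matrix.toEuclideanLin (M (j, false)) (b p) = ((idx p).1 (j, false)) • b p :=
      heig p (j, false)
    have h2 : Matrix.toEuclideanLin (M (j, true)) (b p) = ((idx p).1 (j, true)) • b p :=
      heig p (j, true)
    rw [h1, h2, smul_smul, ← add_smul, hd]
  -- back to matrices
  set u : Fin k → (Fin k → ℂ) := fun p => WithLp.equiv 2 (Fin k → ℂ) (b p) with hu
  have hmulVec : ∀ j p, A j *ᵥ u p = d j p • u p := by
    intro j p
    have := congrArg (WithLp.equiv 2 (Fin k → ℂ)) (hvec j p)
    exact this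
  set U : Matrix (Fin k) (Fin k) ℂ := Matrix.of (fun i p => u p i) with hU
  have horth : ∀ p q, dotProduct (star (u p)) (u q) = if p = q then 1 else 0 := by
    intro p q
    rw [dotProduct_comm]
    exact orthonormal_iff_ite.mp b.orthonormal p q
  have hUstar : star U * U = 1 := by
    ext p q
    rw [Matrix.star_eq_conjTranspose, Matrix.mul_apply, Matrix.one_apply, ← horth p q]
    simp [dotProduct, hU, mul_comm]
  refine ⟨U, Unitary.mem_iff.mpr ⟨hUstar, mul_eq_one_comm.mp hUstar⟩, d, ?_⟩
  intro j
  ext i q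
  rw [Matrix.mul_apply, Matrix.mul_apply]
  have h1 : (A j *ᵥ u q) i = d j q * u q i := by rw [hmulVec j q]; rfl
  calc ∑ l, A j i l * U l q = (A j *ᵥ u q) i := by rw [Matrix.mulVec, dotProduct]; rfl
    _ = d j q * u q i := h1
    _ = ∑ l, U i l * Matrix.diagonal (d j) l q := by
        rw [Finset.sum_eq_single_of_mem q (Finset.mem_univ q) (fun l _ hl => by
          rw [Matrix.diagonal_apply_ne _ hl, mul_zero]), Matrix.diagonal_apply_eq]
        exact mul_comm _ _




open Matrix in
set_option maxHeartbeats 1000000 in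
/-- If a commuting `n`-tuple of unitary `k × k` matrices is simultaneously conjugate (by a
unitary matrix `V`) to the tuple of its entrywise complex conjugates, then it is
simultaneously conjugate by a unitary matrix `W` to a tuple of matrices with real
entries (which are then real orthogonal matrices). -/
theorem commuting_unitary_tuple_conjugate_to_real
    (n k : ℕ) (A : Fin n → Matrix (Fin k) (Fin k) ℂ)
    (hA : ∀ j, A j ∈ Matrix.unitaryGroup (Fin k) ℂ)
    (hcomm : ∀ i j, A i * A j = A j * A i)
    (V : Matrix (Fin k) (Fin k) ℂ) (hV : V ∈ Matrix.unitaryGroup (Fin k) ℂ)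
    (hconj : ∀ j, V⁻¹ * A j * V = (A j).map (starRingEnd ℂ)) :
    ∃ W ∈ Matrix.unitaryGroup (Fin k) ℂ,
      ∀ j p q, ∃ r : ℝ, (W⁻¹ * A j * W) p q = (r : ℂ) := by
  classical
  obtain ⟨U, hU, d, hdiag⟩ := exists_unitary_simultaneous_diag n k A hA hcomm
  have hUs : star U * U = 1 := (Unitary.mem_iff.mp hU).1
  have hUs' : U * star U = 1 := (Unitary.mem_iff.mp hU).2
  have hVs : star V * V = 1 := (Unitary.mem_iff.mp hV).1
  have hVs' : V * star V = 1 := (Unitary.mem_iff.mp hV).2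
  have hVinv : V⁻¹ = star V := Matrix.inv_eq_left_inv hVs
  have hAV : ∀ j, A j * V = V * (A j).map (starRingEnd ℂ) := by
    intro j
    have h := hconj j
    rw [hVinv] at h
    calc A j * V = V * (star V * A j * V) := by
          rw [← Matrix.mul_assoc, ← Matrix.mul_assoc, hVs', Matrix.one_mul]
      _ = V * (A j).map (starRingEnd ℂ) := by rw [h]
  have hUAU : ∀ j, star U * A j * U = Matrix.diagonal (d j) := by
    intro j
    rw [Matrix.mul_assoc, hdiag j, ← Matrix.mul_assoc, hUs, Matrix.one_mul]
  -- conjugation toolbox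
  have hCmul : ∀ X Y : Matrix (Fin k) (Fin k) ℂ,
      (X * Y).map (starRingEnd ℂ) = X.map (starRingEnd ℂ) * Y.map (starRingEnd ℂ) :=
    fun X Y => Matrix.map_mul
  have hCone : (1 : Matrix (Fin k) (Fin k) ℂ).map (starRingEnd ℂ) = 1 :=
    Matrix.map_one _ (map_zero _) (map_one _)
  have hCstar : ∀ X : Matrix (Fin k) (Fin k) ℂ,
      star (X.map (starRingEnd ℂ)) = (star X).map (starRingEnd ℂ) := by
    intro X
    ext p q
    simp [Matrix.star_apply, Matrix.map_apply]
  have hCU : U.map (starRingEnd ℂ) ∈ Matrix.unitaryGroup (Fin k) ℂ := by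
    rw [Unitary.mem_iff]
    constructor
    · rw [hCstar, ← hCmul, hUs, hCone]
    · rw [hCstar, ← hCmul, hUs', hCone]
  -- the intertwiner in the diagonal picture
  set Q : Matrix (Fin k) (Fin k) ℂ := star U * V * U.map (starRingEnd ℂ) with hQdef
  have hQmem : Q ∈ Matrix.unitaryGroup (Fin k) ℂ :=
    mul_mem (mul_mem (Unitary.star_mem hU) hV) hCU
  have hQrel : ∀ j, Matrix.diagonal (d j) * Q =
      Q * (Matrix.diagonal (d j)).map (starRingEnd ℂ) := by
    intro j
    calc Matrix.diagonal (d j) * Q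
        = (star U * A j * U) * (star U * V * U.map (starRingEnd ℂ)) := by rw [hUAU]
      _ = star U * (A j * (U * star U) * V) * U.map (starRingEnd ℂ) := by
          simp only [Matrix.mul_assoc]
      _ = star U * (A j * V) * U.map (starRingEnd ℂ) := by rw [hUs', Matrix.mul_one]
      _ = star U * (V * (A j).map (starRingEnd ℂ)) * U.map (starRingEnd ℂ) := by rw [hAV]
      _ = star U * V * ((A j).map (starRingEnd ℂ) * U.map (starRingEnd ℂ)) := by
          simp only [Matrix.mul_assoc]
      _ = star U * V * ((A j * U).map (starRingEnd ℂ)) := by rw [hCmul]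
      _ = star U * V * ((U * Matrix.diagonal (d j)).map (starRingEnd ℂ)) := by rw [hdiag]
      _ = star U * V * (U.map (starRingEnd ℂ) * (Matrix.diagonal (d j)).map (starRingEnd ℂ)) := by
          rw [hCmul]
      _ = Q * (Matrix.diagonal (d j)).map (starRingEnd ℂ) := by
          simp only [hQdef, Matrix.mul_assoc]
  have hQdet : Q.det ≠ 0 :=
    (Matrix.isUnit_det_of_right_inverse (Unitary.mem_iff.mp hQmem).2).ne_zero
  have hperm : ∃ σ : Equiv.Perm (Fin k), ∀ i, Q (σ i) i ≠ 0 := by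
    by_contra hcon
    push_neg at hcon
    apply hQdet
    rw [Matrix.det_apply]
    apply Finset.sum_eq_zero
    intro σ _
    obtain ⟨i, hi⟩ := hcon σ
    have hzero : (∏ x : Fin k, Q (σ x) x) = 0 := Finset.prod_eq_zero (Finset.mem_univ i) hi
    rw [hzero, smul_zero]
  obtain ⟨σ, hσ0⟩ := hperm
  have hrel : ∀ j i, d j (σ i) = starRingEnd ℂ (d j i) := by
    intro j i
    have h := Matrix.ext_iff.mpr (hQrel j) (σ i) i
    rw [Matrix.diagonal_mul, Matrix.diagonal_map (map_zero _), Matrix.mul_diagonal] at h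
    have h2 : d j (σ i) * Q (σ i) i = starRingEnd ℂ (d j i) * Q (σ i) i := by
      rw [h]; ring
    exact mul_right_cancel₀ (hσ0 i) h2
  obtain ⟨τ, hτinv, hτrel⟩ := exists_involution_matching
    (fun p => fun j => d j p) (fun v => fun j => starRingEnd ℂ (v j))
    (by intro v; funext j; simp) σ (by intro a; funext j; exact hrel j a)
  have hτd : ∀ j p, d j (τ p) = starRingEnd ℂ (d j p) := fun j p => congrFun (hτrel p) j
  -- the correction matrix
  set c1 : ℂ := (1 - Complex.I)/2 with hc1
  set c2 : ℂ := (1 + Complex.I)/2 with hc2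
  have e1 : c1*c1 + c2*c2 = 0 := by
    rw [hc1, hc2]
    linear_combination (1/2 : ℂ) * Complex.I_sq
  have e2 : c1*c2 + c2*c1 = 1 := by
    rw [hc1, hc2]
    linear_combination (-1/2 : ℂ) * Complex.I_sq
  have h2c : (starRingEnd ℂ) 2 = 2 := map_ofNat (starRingEnd ℂ) 2
  have c_one : (starRingEnd ℂ) (1:ℂ) = 1 := RingHom.map_one _
  have hcc1 : starRingEnd ℂ c1 = c2 := by
    rw [hc1, hc2, map_div₀, RingHom.map_sub, c_one, Complex.conj_I, h2c]
    ring
  have hcc2 : starRingEnd ℂ c2 = c1 := by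
    rw [hc1, hc2, map_div₀, RingHom.map_add, c_one, Complex.conj_I, h2c]
    ring
  set P : Matrix (Fin k) (Fin k) ℂ := Matrix.of (fun p q => if p = τ q then 1 else 0) with hP
  have hPapp : ∀ p q, P p q = if p = τ q then 1 else 0 := fun p q => rfl
  have hPP : P * P = 1 := by
    ext p q
    rw [Matrix.mul_apply, Finset.sum_eq_single_of_mem (τ q) (Finset.mem_univ _)
      (fun l _ hl => by rw [hPapp l q, if_neg hl, mul_zero]),
      hPapp p (τ q), hPapp (τ q) q, if_pos rfl, mul_one, hτinv, Matrix.one_apply]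
  have hPt : Pᵀ = P := by
    ext p q
    rw [Matrix.transpose_apply, hPapp q p, hPapp p q]
    by_cases h : q = τ p
    · rw [if_pos h, if_pos (by rw [h, hτinv])]
    · rw [if_neg h, if_neg (fun hc => h (by rw [hc, hτinv]))]
  have hPc : P.map (starRingEnd ℂ) = P := by
    ext p q
    by_cases h : p = τ q
    · rw [Matrix.map_apply, hPapp p q, if_pos h, RingHom.map_one]
    · rw [Matrix.map_apply, hPapp p q, if_neg h, RingHom.map_zero]
  set T : Matrix (Fin k) (Fin k) ℂ := c1 • 1 + c2 • P with hT
  set T' : Matrix (Fin k) (Fin k) ℂ := c2 • 1 + c1 • P with hT'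
  have expand : ∀ a b a' b' : ℂ, (a • (1 : Matrix (Fin k) (Fin k) ℂ) + b • P) *
      (a' • 1 + b' • P) = (a*a' + b*b') • 1 + (a*b' + b*a') • P := by
    intro a b a' b'
    simp only [Matrix.add_mul, Matrix.mul_add, smul_mul_assoc, mul_smul_comm,
      Matrix.one_mul, Matrix.mul_one, hPP, smul_smul, smul_add, add_smul]
    module
  have hTT : T * T = P := by
    rw [hT, expand, e1, zero_smul, zero_add]
    have : c1*c2 + c2*c1 = 1 := e2
    rw [this, one_smul]
  have hT'T : T' * T = 1 := by
    rw [hT, hT', expand]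
    have f1 : c2*c1 + c1*c2 = 1 := by rw [add_comm]; exact e2
    have f2 : c2*c2 + c1*c1 = 0 := by rw [add_comm]; exact e1
    rw [f1, f2, one_smul, zero_smul, add_zero]
  have hTT' : T * T' = 1 := by
    rw [hT, hT', expand, e2, e1, one_smul, zero_smul, add_zero]
  have hTt : Tᵀ = T := by
    rw [hT, Matrix.transpose_add, Matrix.transpose_smul, Matrix.transpose_smul,
      Matrix.transpose_one, hPt]
  have hT't : T'ᵀ = T' := by
    rw [hT', Matrix.transpose_add, Matrix.transpose_smul, Matrix.transpose_smul,
      Matrix.transpose_one, hPt]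
  have hone : ∀ p q : Fin k, (starRingEnd ℂ) ((1 : Matrix (Fin k) (Fin k) ℂ) p q) =
      (1 : Matrix (Fin k) (Fin k) ℂ) p q := by
    intro p q
    by_cases h : p = q
    · rw [h, Matrix.one_apply_eq, RingHom.map_one]
    · rw [Matrix.one_apply_ne h, RingHom.map_zero]
  have hPone : ∀ p q : Fin k, (starRingEnd ℂ) (P p q) = P p q := by
    intro p q
    have h := Matrix.ext_iff.mpr hPc p q
    rwa [Matrix.map_apply] at h
  have hTmap : T.map (starRingEnd ℂ) = T' := by
    ext p q
    rw [Matrix.map_apply, hT, hT']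
    simp only [Matrix.add_apply, Matrix.smul_apply, smul_eq_mul, _root_.map_add,
      _root_.map_mul, hcc1, hcc2, hone, hPone]
  have hT'map : T'.map (starRingEnd ℂ) = T := by
    ext p q
    rw [Matrix.map_apply, hT, hT']
    simp only [Matrix.add_apply, Matrix.smul_apply, smul_eq_mul, _root_.map_add,
      _root_.map_mul, hcc1, hcc2, hone, hPone]
  have hstarT : star T = T' := by
    have h1 : star T = (T.map (starRingEnd ℂ))ᵀ := by
      ext p q
      simp [Matrix.star_apply, Matrix.map_apply, Matrix.transpose_apply]
    rw [h1, hTmap, hT't]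
  have hstarT' : star T' = T := by
    have h1 : star T' = (T'.map (starRingEnd ℂ))ᵀ := by
      ext p q
      simp [Matrix.star_apply, Matrix.map_apply, Matrix.transpose_apply]
    rw [h1, hT'map, hTt]
  -- P T = T' and T' P = T
  have hPT : P * T = T' := by
    calc P * T = (P * T) * (T * T') := by rw [hTT', Matrix.mul_one]
      _ = (P * (T * T)) * T' := by simp only [Matrix.mul_assoc]
      _ = (P * P) * T' := by rw [hTT]
      _ = T' := by rw [hPP, Matrix.one_mul]
  have hT'P : T' * P = T := by
    calc T' * P = T' * (T * T) := by rw [hTT]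
      _ = (T' * T) * T := by simp only [Matrix.mul_assoc]
      _ = T := by rw [hT'T, Matrix.one_mul]
  -- the final unitary W
  set W : Matrix (Fin k) (Fin k) ℂ := U * T with hW
  have hTmem : T ∈ Matrix.unitaryGroup (Fin k) ℂ := by
    rw [Unitary.mem_iff]
    constructor
    · rw [hstarT, hT'T]
    · rw [hstarT, hTT']
  have hWmem : W ∈ Matrix.unitaryGroup (Fin k) ℂ := mul_mem hU hTmem
  have hWs : star W * W = 1 := (Unitary.mem_iff.mp hWmem).1
  have hWinv : W⁻¹ = star W := Matrix.inv_eq_left_inv hWs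
  refine ⟨W, hWmem, ?_⟩
  have hMform : ∀ j, W⁻¹ * A j * W = T' * Matrix.diagonal (d j) * T := by
    intro j
    rw [hWinv, hW, Matrix.star_mul, hstarT]
    calc (T' * star U) * A j * (U * T)
        = T' * (star U * A j * U) * T := by simp only [Matrix.mul_assoc]
      _ = T' * Matrix.diagonal (d j) * T := by rw [hUAU]
  -- diagonal conjugation relations
  have hDP : ∀ j, Matrix.diagonal (d j) * P =
      P * (Matrix.diagonal (d j)).map (starRingEnd ℂ) := by
    intro j
    ext p q
    rw [Matrix.diagonal_mul, Matrix.diagonal_map (map_zero _), Matrix.mul_diagonal,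
      hPapp p q]
    by_cases h : p = τ q
    · rw [if_pos h, mul_one, one_mul, h, hτd]
    · rw [if_neg h, mul_zero, zero_mul]
  have hDrec : ∀ j, Matrix.diagonal (d j) =
      P * (Matrix.diagonal (d j)).map (starRingEnd ℂ) * P := by
    intro j
    calc Matrix.diagonal (d j) = Matrix.diagonal (d j) * (P * P) := by
          rw [hPP, Matrix.mul_one]
      _ = (Matrix.diagonal (d j) * P) * P := by simp only [Matrix.mul_assoc]
      _ = P * (Matrix.diagonal (d j)).map (starRingEnd ℂ) * P := by rw [hDP]
  have hself : ∀ j, (T' * Matrix.diagonal (d j) * T).map (starRingEnd ℂ) =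
      T' * Matrix.diagonal (d j) * T := by
    intro j
    rw [hCmul, hCmul, hT'map, hTmap]
    calc T * (Matrix.diagonal (d j)).map (starRingEnd ℂ) * T'
        = (T' * P) * (Matrix.diagonal (d j)).map (starRingEnd ℂ) * (P * T) := by
          rw [hT'P, hPT]
      _ = T' * (P * (Matrix.diagonal (d j)).map (starRingEnd ℂ) * P) * T := by
          simp only [Matrix.mul_assoc]
      _ = T' * Matrix.diagonal (d j) * T := by rw [← hDrec]
  intro j p q
  have hz : starRingEnd ℂ ((W⁻¹ * A j * W) p q) = (W⁻¹ * A j * W) p q := by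
    have h := Matrix.ext_iff.mpr (by rw [hMform j]; exact hself j :
      (W⁻¹ * A j * W).map (starRingEnd ℂ) = T' * Matrix.diagonal (d j) * T) p q
    rw [Matrix.map_apply] at h
    rw [h, ← hMform j]
  exact ⟨((W⁻¹ * A j * W) p q).re, (Complex.conj_eq_iff_re.mp hz).symm⟩
end

section
/- Fix n, m ≥ 1. Let T = (S¹)ⁿ be the n-torus, where S¹ is the unit circle in ℂ. The continuous map T^m → C_n(U(m)) which sends an m-tuple (λ_1, …, λ_m) of points λ_i = (λ_i^{(1)},…,λ_i^{(n)}) ∈ T to the commuting n-tuple of diagonal matrices (D_1,…,D_n), where D_j = diag(λ_1^{(j)}, …, λ_m^{(j)}), descends to a homeomorphism from the symmetric product T^m/Σ_m (the quotient of T^m by the symmetric group Σ_m permuting the m coordinates) onto the representation space Rep_n(U(m)) = C_n(U(m))/U(m). -/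
/-- The space `C_n(G)` of commuting `n`-tuples in a topological group `G`, topologized as
a subspace of `Gⁿ`. -/
def CommTuples (n : ℕ) (G : Type*) [Group G] : Type _ :=
  {g : Fin n → G // ∀ i j, g i * g j = g j * g i}

instance (n : ℕ) (G : Type*) [Group G] [TopologicalSpace G] :
    TopologicalSpace (CommTuples n G) :=
  inferInstanceAs (TopologicalSpace {g : Fin n → G // ∀ i j, g i * g j = g j * g i})

/-- The conjugacy relation on commuting tuples: `y` is the (diagonal) conjugate of `x` by
some `g ∈ G`. -/
def repRel (n : ℕ) (G : Type*) [Group G] (x y : CommTuples n G) : Prop :=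
  ∃ g : G, ∀ i, y.1 i = g * x.1 i * g⁻¹

/-- The representation space `Rep_n(G) = C_n(G)/G`, the quotient of `C_n(G)` by the
conjugation action of `G`, with the quotient topology. -/
def RepSpace (n : ℕ) (G : Type*) [Group G] [TopologicalSpace G] : Type _ :=
  Quot (repRel n G)

instance (n : ℕ) (G : Type*) [Group G] [TopologicalSpace G] :
    TopologicalSpace (RepSpace n G) :=
  inferInstanceAs (TopologicalSpace (Quot (repRel n G)))

/-- A diagonal matrix whose diagonal entries lie on the unit circle is unitary. -/
lemma diagonal_circle_mem_unitaryGroup {m : ℕ} (d : Fin m → Circle) :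
    Matrix.diagonal (fun i => (d i : ℂ)) ∈ Matrix.unitaryGroup (Fin m) ℂ := by
  rw [Matrix.mem_unitaryGroup_iff, Matrix.star_eq_conjTranspose,
    Matrix.diagonal_conjTranspose, Matrix.diagonal_mul_diagonal, ← Matrix.diagonal_one]
  funext i
  simp [Pi.star_apply, Complex.mul_conj]

/-- The commuting `n`-tuple of diagonal unitary matrices `(D₁, …, Dₙ)` attached to an
`m`-tuple `λ = (λ₁, …, λ_m)` of points of the `n`-torus, where
`D_j = diag(λ₁⁽ʲ⁾, …, λ_m⁽ʲ⁾)`. -/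
def diagTuple (n m : ℕ) (lam : Fin m → Fin n → Circle) :
    CommTuples n (Matrix.unitaryGroup (Fin m) ℂ) :=
  ⟨fun j => ⟨Matrix.diagonal (fun i => (lam i j : ℂ)),
      diagonal_circle_mem_unitaryGroup _⟩,
   fun j j' => Subtype.ext (by
      simp only [Submonoid.coe_mul]
      simp [Matrix.diagonal_mul_diagonal, mul_comm])⟩

/-- The relation on `T^m` (with `T = (S¹)ⁿ` the `n`-torus) identifying two `m`-tuples
which differ by a permutation of the `m` coordinates. -/
def symRel (n m : ℕ) (a b : Fin m → Fin n → Circle) : Prop :=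
  ∃ σ : Equiv.Perm (Fin m), b = a ∘ σ

/-! ### Auxiliary material -/

namespace SPTAux

open Matrix

attribute [local instance 10] Classical.propDecidable

/-- `repRel` is an equivalence relation. -/
lemma repRel_equivalence (n : ℕ) (G : Type*) [Group G] : Equivalence (repRel n G) := by
  constructor
  · intro x; exact ⟨1, fun i => by simp⟩
  · rintro x y ⟨g, hg⟩
    exact ⟨g⁻¹, fun i => by rw [hg i]; group⟩
  · rintro x y z ⟨g, hg⟩ ⟨k, hk⟩
    exact ⟨k * g, fun i => by rw [hk i, hg i]; group⟩

/-- `symRel` is an equivalence relation. -/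
lemma symRel_equivalence (n m : ℕ) : Equivalence (symRel n m) := by
  constructor
  · intro a; exact ⟨1, by ext i : 1; simp⟩
  · rintro a b ⟨σ, rfl⟩
    exact ⟨σ⁻¹, by ext i : 1; simp⟩
  · rintro a b c ⟨σ, rfl⟩ ⟨τ, rfl⟩
    exact ⟨σ * τ, by ext i : 1; simp [Equiv.Perm.mul_apply]⟩

section Perm

variable {m : ℕ}

lemma star_permMatrix (σ : Equiv.Perm (Fin m)) :
    star (σ.permMatrix ℂ) = (σ⁻¹).permMatrix ℂ := by
  ext i j
  simp only [Matrix.star_apply, PEquiv.toMatrix_apply, Equiv.toPEquiv_apply,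
    Option.mem_some_iff, apply_ite (star : ℂ → ℂ), star_one, star_zero]
  by_cases h : σ j = i
  · rw [if_pos h, if_pos (by rw [← h]; exact Equiv.symm_apply_apply σ j)]
  · rw [if_neg h, if_neg (fun h' => h (by rw [← h']; exact Equiv.apply_symm_apply σ i))]

lemma permMatrix_mul_permMatrix (σ τ : Equiv.Perm (Fin m)) :
    (σ.permMatrix ℂ) * (τ.permMatrix ℂ) = ((τ * σ : Equiv.Perm (Fin m)).permMatrix ℂ) := by
  simp only [Equiv.Perm.permMatrix]
  rw [Equiv.Perm.mul_def, Equiv.toPEquiv_trans, PEquiv.toMatrix_trans]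

lemma permMatrix_one : ((1 : Equiv.Perm (Fin m)).permMatrix ℂ) = 1 := by
  simp only [Equiv.Perm.permMatrix]
  rw [show (1 : Equiv.Perm (Fin m)) = Equiv.refl (Fin m) from rfl, Equiv.toPEquiv_refl,
    PEquiv.toMatrix_refl]

lemma permMatrix_mem_unitaryGroup (σ : Equiv.Perm (Fin m)) :
    σ.permMatrix ℂ ∈ Matrix.unitaryGroup (Fin m) ℂ := by
  rw [Matrix.mem_unitaryGroup_iff, star_permMatrix, permMatrix_mul_permMatrix,
    inv_mul_cancel, permMatrix_one]

lemma permMatrix_conj_diagonal (σ : Equiv.Perm (Fin m)) (d : Fin m → ℂ) :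
    σ.permMatrix ℂ * Matrix.diagonal d * star (σ.permMatrix ℂ) = Matrix.diagonal (d ∘ σ) := by
  rw [star_permMatrix, PEquiv.mul_toMatrix_toPEquiv, PEquiv.toMatrix_toPEquiv_mul,
    Matrix.submatrix_submatrix]
  have h2 : (σ⁻¹ : Equiv.Perm (Fin m)).symm = σ := by
    rw [← Equiv.Perm.inv_def, inv_inv]
  have h : ((σ⁻¹ : Equiv.Perm (Fin m)).symm : Fin m → Fin m) = σ := congrArg _ h2
  rw [h, Function.id_comp, Function.comp_id, Matrix.submatrix_diagonal d σ σ.injective]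

/-- Permuted torus points give conjugate diagonal tuples. -/
lemma diagTuple_rep_of_symRel {n m : ℕ} {a b : Fin m → Fin n → Circle}
    (h : symRel n m a b) :
    repRel n (Matrix.unitaryGroup (Fin m) ℂ) (diagTuple n m a) (diagTuple n m b) := by
  obtain ⟨σ, rfl⟩ := h
  refine ⟨⟨σ.permMatrix ℂ, permMatrix_mem_unitaryGroup σ⟩, fun j => ?_⟩
  apply Subtype.ext
  show Matrix.diagonal (fun i => ((a ∘ σ) i j : ℂ))
      = σ.permMatrix ℂ * Matrix.diagonal (fun i => (a i j : ℂ)) * star (σ.permMatrix ℂ)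
  rw [permMatrix_conj_diagonal]
  rfl

end Perm

section Fiber

variable {n m : ℕ}

/-- The subspace of vectors supported on the fiber of `a` over `v`. -/
noncomputable def fiberSub (a : Fin m → Fin n → Circle) (v : Fin n → Circle) :
    Submodule ℂ (Fin m → ℂ) where
  carrier := {x | ∀ i, a i ≠ v → x i = 0}
  add_mem' := fun hx hy i hi => by
    rw [Pi.add_apply, hx i hi, hy i hi, add_zero]
  zero_mem' := fun i _ => rfl
  smul_mem' := fun c x hx i hi => by
    rw [Pi.smul_apply, hx i hi, smul_zero]

lemma mem_fiberSub_iff (a : Fin m → Fin n → Circle) (v : Fin n → Circle) (x : Fin m → ℂ) :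
    x ∈ fiberSub a v ↔
      ∀ j, (Matrix.diagonal fun i => (a i j : ℂ)) *ᵥ x = (v j : ℂ) • x := by
  constructor
  · intro hx j
    funext i
    rw [Matrix.mulVec_diagonal]
    by_cases h : a i = v
    · rw [h]; rfl
    · simp [hx i h]
  · intro h i hi
    have hj : ∃ j, a i j ≠ v j := by
      by_contra hc; push_neg at hc; exact hi (funext hc)
    obtain ⟨j, hj⟩ := hj
    have hcoe : (a i j : ℂ) ≠ (v j : ℂ) := fun hc => hj (Subtype.coe_injective hc)
    have h2 := congrFun (h j) i
    rw [Matrix.mulVec_diagonal] at h2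
    have h3 : ((a i j : ℂ) - (v j : ℂ)) * x i = 0 := by
      rw [sub_mul, h2]; simp [mul_comm]
    rcases mul_eq_zero.mp h3 with h4 | h4
    · exact absurd (sub_eq_zero.mp h4) hcoe
    · exact h4

/-- The fiber subspace is linearly equivalent to functions on the fiber. -/
noncomputable def fiberSubEquiv (a : Fin m → Fin n → Circle) (v : Fin n → Circle) :
    fiberSub a v ≃ₗ[ℂ] ({i // a i = v} → ℂ) where
  toFun x := fun i => x.1 i.1
  map_add' x y := rfl
  map_smul' c x := rfl
  invFun y := ⟨fun i => if h : a i = v then y ⟨i, h⟩ else 0, fun i hi => dif_neg hi⟩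
  left_inv x := by
    apply Subtype.ext
    funext i
    by_cases h : a i = v
    · simp [h]
    · simp [h, x.2 i h]
  right_inv y := by
    funext i
    simp [i.2]

lemma finrank_fiberSub (a : Fin m → Fin n → Circle) (v : Fin n → Circle) :
    Module.finrank ℂ (fiberSub a v) = Fintype.card {i // a i = v} := by
  rw [(fiberSubEquiv a v).finrank_eq, Module.finrank_fintype_fun_eq_card]

lemma card_fiber_le_of_conj {a b : Fin m → Fin n → Circle}
    (g : Matrix (Fin m) (Fin m) ℂ) (hg : g ∈ Matrix.unitaryGroup (Fin m) ℂ)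
    (h : ∀ j, Matrix.diagonal (fun i => (b i j : ℂ))
        = g * Matrix.diagonal (fun i => (a i j : ℂ)) * star g)
    (v : Fin n → Circle) :
    Fintype.card {i // a i = v} ≤ Fintype.card {i // b i = v} := by
  have hgsg : star g * g = 1 := Matrix.mem_unitaryGroup_iff'.mp hg
  have hggs : g * star g = 1 := Matrix.mem_unitaryGroup_iff.mp hg
  have hmap : ∀ x ∈ fiberSub a v, g.mulVecLin x ∈ fiberSub b v := by
    intro x hx
    rw [mem_fiberSub_iff] at hx ⊢
    intro j
    show Matrix.diagonal (fun i => (b i j : ℂ)) *ᵥ (g *ᵥ x) = _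
    rw [Matrix.mulVec_mulVec, h j, mul_assoc (g * Matrix.diagonal fun i => (a i j : ℂ)),
      hgsg, mul_one, ← Matrix.mulVec_mulVec, hx j, Matrix.mulVec_smul]
    rfl
  have hinj : Function.Injective (g.mulVecLin.restrict hmap) := by
    intro x y hxy
    have h1 : g *ᵥ (x : Fin m → ℂ) = g *ᵥ (y : Fin m → ℂ) := congrArg Subtype.val hxy
    have h2 := congrArg (fun w => star g *ᵥ w) h1
    simp only [Matrix.mulVec_mulVec, hgsg, Matrix.one_mulVec] at h2
    exact Subtype.ext h2
  have := LinearMap.finrank_le_finrank_of_injective hinj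
  rwa [finrank_fiberSub, finrank_fiberSub] at this

lemma symRel_of_card_fiber_eq {a b : Fin m → Fin n → Circle}
    (h : ∀ v, Fintype.card {i // a i = v} = Fintype.card {i // b i = v}) :
    symRel n m a b := by
  classical
  have e : ∀ v, {i // a i = v} ≃ {i // b i = v} := fun v => Fintype.equivOfCardEq (h v)
  let σ : Equiv.Perm (Fin m) :=
    (Equiv.sigmaFiberEquiv a).symm.trans ((Equiv.sigmaCongrRight e).trans
      (Equiv.sigmaFiberEquiv b))
  have hσ : ∀ i, b (σ i) = a i := fun i => ((e (a i)) ⟨i, rfl⟩).2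
  refine ⟨σ⁻¹, funext fun i => ?_⟩
  have := hσ (σ⁻¹ i)
  rw [show σ (σ⁻¹ i) = i from Equiv.apply_symm_apply σ i] at this
  exact this.symm ▸ rfl

/-- Conjugate diagonal tuples come from permuted torus points. -/
lemma symRel_of_diagTuple_rep {a b : Fin m → Fin n → Circle}
    (h : repRel n (Matrix.unitaryGroup (Fin m) ℂ) (diagTuple n m a) (diagTuple n m b)) :
    symRel n m a b := by
  obtain ⟨g, hg⟩ := h
  have hmat : ∀ j, Matrix.diagonal (fun i => (b i j : ℂ))
      = (g : Matrix (Fin m) (Fin m) ℂ) * Matrix.diagonal (fun i => (a i j : ℂ))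
          * star (g : Matrix (Fin m) (Fin m) ℂ) := by
    intro j
    exact congrArg Subtype.val (hg j)
  have hcard : ∀ v, Fintype.card {i // b i = v} = Fintype.card {i // a i = v} := by
    intro v
    refine le_antisymm ?_ (card_fiber_le_of_conj _ g.2 hmat v)
    have hg2 : (star (g : Matrix (Fin m) (Fin m) ℂ)) ∈ Matrix.unitaryGroup (Fin m) ℂ :=
      Unitary.star_mem g.2
    refine card_fiber_le_of_conj _ hg2 (fun j => ?_) v
    rw [star_star]
    have := hmat j
    have hgsg : star (g : Matrix (Fin m) (Fin m) ℂ) * g = 1 :=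
      Matrix.mem_unitaryGroup_iff'.mp g.2
    have hggs : (g : Matrix (Fin m) (Fin m) ℂ) * star (g : Matrix (Fin m) (Fin m) ℂ) = 1 :=
      Matrix.mem_unitaryGroup_iff.mp g.2
    have key : star (g : Matrix (Fin m) (Fin m) ℂ) * ((g : Matrix (Fin m) (Fin m) ℂ)
          * Matrix.diagonal (fun i => (a i j : ℂ)) * star (g : Matrix (Fin m) (Fin m) ℂ))
          * (g : Matrix (Fin m) (Fin m) ℂ)
        = Matrix.diagonal (fun i => (a i j : ℂ)) := by
      calc star (g : Matrix (Fin m) (Fin m) ℂ) * ((g : Matrix (Fin m) (Fin m) ℂ)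
            * Matrix.diagonal (fun i => (a i j : ℂ)) * star (g : Matrix (Fin m) (Fin m) ℂ))
            * (g : Matrix (Fin m) (Fin m) ℂ)
          = (star (g : Matrix (Fin m) (Fin m) ℂ) * g) * Matrix.diagonal (fun i => (a i j : ℂ))
              * (star (g : Matrix (Fin m) (Fin m) ℂ) * g) := by noncomm_ring
        _ = Matrix.diagonal (fun i => (a i j : ℂ)) := by rw [hgsg, one_mul, mul_one]
    rw [this]
    exact key.symm
  exact (symRel_equivalence n m).symm (symRel_of_card_fiber_eq hcard)

end Fiber

section Surj

variable {n m : ℕ}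

lemma entry_norm_one_of_diagonal_mem {d : Fin m → ℂ}
    (h : Matrix.diagonal d ∈ Matrix.unitaryGroup (Fin m) ℂ) (i : Fin m) : ‖d i‖ = 1 := by
  have h1 : star (Matrix.diagonal d) * Matrix.diagonal d = 1 :=
    Matrix.mem_unitaryGroup_iff'.mp h
  rw [Matrix.star_eq_conjTranspose, Matrix.diagonal_conjTranspose,
    Matrix.diagonal_mul_diagonal] at h1
  have h2 := congrFun (congrFun h1 i) i
  simp only [Matrix.diagonal_apply_eq, Matrix.one_apply_eq, Pi.star_apply] at h2
  have h3 : (Complex.normSq (d i) : ℂ) = 1 := by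
    rw [Complex.normSq_eq_conj_mul_self]
    exact h2
  have h4 : Complex.normSq (d i) = 1 := by exact_mod_cast h3
  have h5 : ‖d i‖ ^ 2 = 1 := by
    rw [Complex.sq_norm]
    exact h4
  nlinarith [norm_nonneg (d i)]

lemma toEuclideanLin_mul (M N : Matrix (Fin m) (Fin m) ℂ) :
    Matrix.toEuclideanLin (M * N) = (Matrix.toEuclideanLin M).comp (Matrix.toEuclideanLin N) := by
  rw [Matrix.toEuclideanLin_eq_toLin,
    Matrix.toLin_mul (PiLp.basisFun 2 ℂ (Fin m)) (PiLp.basisFun 2 ℂ (Fin m))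
      (PiLp.basisFun 2 ℂ (Fin m))]

lemma commute_toEuclideanLin {M N : Matrix (Fin m) (Fin m) ℂ} (h : Commute M N) :
    Commute (Matrix.toEuclideanLin M) (Matrix.toEuclideanLin N) := by
  unfold Commute SemiconjBy
  rw [Module.End.mul_eq_comp, Module.End.mul_eq_comp, ← toEuclideanLin_mul, ← toEuclideanLin_mul, h]

/-- Every commuting tuple of unitaries is conjugate to a diagonal tuple. -/
lemma exists_diag_rep (x : CommTuples n (Matrix.unitaryGroup (Fin m) ℂ)) :
    ∃ lam : Fin m → Fin n → Circle,
      repRel n (Matrix.unitaryGroup (Fin m) ℂ) (diagTuple n m lam) x := by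
  classical
  set A : Fin n → Matrix (Fin m) (Fin m) ℂ := fun j => (x.1 j : Matrix (Fin m) (Fin m) ℂ)
    with hAdef
  have hAmem : ∀ j, A j ∈ Matrix.unitaryGroup (Fin m) ℂ := fun j => (x.1 j).2
  have hAcomm : ∀ j k, Commute (A j) (A k) := by
    intro j k
    show A j * A k = A k * A j
    have h := congrArg Subtype.val (x.2 j k)
    simpa using h
  have hAstar : ∀ j k, Commute (A j) (star (A k)) := by
    intro j k
    have h1 : x.1 j * (x.1 k)⁻¹ = (x.1 k)⁻¹ * x.1 j := Commute.inv_right (x.2 j k)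
    show A j * star (A k) = star (A k) * A j
    have h := congrArg Subtype.val h1
    simpa [← Unitary.star_eq_inv] using h
  set H : (Fin n × Bool) → Matrix (Fin m) (Fin m) ℂ := fun p =>
    cond p.2 ((Complex.I * (1/2 : ℂ)) • (star (A p.1) - A p.1))
      ((1/2 : ℂ) • (A p.1 + star (A p.1))) with hHdef
  have hhalf : star ((1:ℂ)/2) = ((1:ℂ)/2) := by
    simp [Complex.star_def, Complex.ext_iff]
  have hHherm : ∀ p, (H p).IsHermitian := by
    rintro ⟨j, bo⟩
    cases bo
    · show ((1/2 : ℂ) • (A j + star (A j))).IsHermitian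
      unfold Matrix.IsHermitian
      rw [← Matrix.star_eq_conjTranspose, star_smul, star_add, star_star, hhalf, add_comm]
    · show ((Complex.I * (1/2 : ℂ)) • (star (A j) - A j)).IsHermitian
      unfold Matrix.IsHermitian
      rw [← Matrix.star_eq_conjTranspose, star_smul, star_sub, star_star]
      have h1 : star (Complex.I * (1/2 : ℂ)) = -(Complex.I * (1/2 : ℂ)) := by
        simp [Complex.star_def, Complex.ext_iff]
      rw [h1, neg_smul, ← smul_neg, neg_sub]
  have hHcomm : ∀ p q, Commute (H p) (H q) := by
    rintro ⟨j, bj⟩ ⟨k, bk⟩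
    have h1 : Commute (A j) (A k) := hAcomm j k
    have h2 : Commute (A j) (star (A k)) := hAstar j k
    have h3 : Commute (star (A j)) (A k) := (hAstar k j).symm
    have h4 : Commute (star (A j)) (star (A k)) := by
      unfold Commute SemiconjBy
      rw [← StarMul.star_mul, ← StarMul.star_mul, hAcomm k j]
    cases bj
    · cases bk
      · exact Commute.smul_right
          (Commute.smul_left (Commute.add_left (h1.add_right h2) (h3.add_right h4)) _) _
      · exact Commute.smul_right
          (Commute.smul_left (Commute.add_left (h2.sub_right h1) (h4.sub_right h3)) _) _
    · cases bk
      · exact Commute.smul_right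
          (Commute.smul_left (Commute.sub_left (h3.add_right h4) (h1.add_right h2)) _) _
      · exact Commute.smul_right
          (Commute.smul_left (Commute.sub_left (h4.sub_right h3) (h2.sub_right h1)) _) _
  set T : (Fin n × Bool) → Module.End ℂ (EuclideanSpace ℂ (Fin m)) :=
    fun p => Matrix.toEuclideanLin (H p) with hTdef
  have hTsym : ∀ p, (T p).IsSymmetric := fun p =>
    Matrix.isHermitian_iff_isSymmetric.mp (hHherm p)
  have hTcomm : ∀ p q, Commute (T p) (T q) := fun p q => commute_toEuclideanLin (hHcomm p q)
  set W : ((Fin n × Bool) → ℂ) → Submodule ℂ (EuclideanSpace ℂ (Fin m)) :=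
    fun χ => ⨅ p, Module.End.eigenspace (T p) (χ p) with hWdef
  have htopAll : ⨆ χ, W χ = ⊤ :=
    LinearMap.IsSymmetric.iSup_iInf_eq_top_of_commute hTsym (fun p q _ => hTcomm p q)
  have hSfin : Set.Finite {χ | W χ ≠ ⊥} := by
    refine Set.Finite.subset
      (Set.Finite.pi (fun p : Fin n × Bool => Module.End.finite_spectrum (T p))) ?_
    intro χ hχ
    intro p _
    have h1 : Module.End.eigenspace (T p) (χ p) ≠ ⊥ := by
      intro hbot
      apply hχ
      refine le_bot_iff.mp ?_
      exact le_trans (iInf_le _ p) (le_of_eq hbot)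
    exact Module.End.hasEigenvalue_iff_mem_spectrum.mp (Module.End.hasEigenvalue_iff.mpr h1)
  haveI : Fintype {χ | W χ ≠ ⊥} := hSfin.fintype
  have hOrthAll := LinearMap.IsSymmetric.orthogonalFamily_iInf_eigenspaces hTsym
  have hOrthS := hOrthAll.comp (Subtype.val_injective :
    Function.Injective (Subtype.val : {χ | W χ ≠ ⊥} → ((Fin n × Bool) → ℂ)))
  have hsupS : ⨆ χ : {χ | W χ ≠ ⊥}, W ↑χ = ⊤ := by
    refine le_antisymm le_top ?_
    rw [← htopAll]
    refine iSup_le fun χ => ?_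
    by_cases h : W χ = ⊥
    · rw [h]; exact bot_le
    · exact le_iSup_of_le (⟨χ, h⟩ : {χ | W χ ≠ ⊥}) le_rfl
  have hInt : DirectSum.IsInternal (fun χ : {χ | W χ ≠ ⊥} => W ↑χ) := by
    refine (OrthogonalFamily.isInternal_iff hOrthS).mpr ?_
    rw [hsupS, Submodule.top_orthogonal_eq_bot]
  have hrank : Module.finrank ℂ (EuclideanSpace ℂ (Fin m)) = m := finrank_euclideanSpace_fin
  let b := hInt.subordinateOrthonormalBasis hrank hOrthS
  let χf : Fin m → ((Fin n × Bool) → ℂ) := fun a =>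
    ((hInt.subordinateOrthonormalBasisIndex hrank a hOrthS : {χ | W χ ≠ ⊥}) :
      (Fin n × Bool) → ℂ)
  have hbmem : ∀ a, b a ∈ W (χf a) := fun a =>
    hInt.subordinateOrthonormalBasis_subordinate hrank a hOrthS
  have heig : ∀ a p, T p (b a) = χf a p • b a := by
    intro a p
    have h0 : b a ∈ ⨅ p, Module.End.eigenspace (T p) (χf a p) := hbmem a
    exact Module.End.mem_eigenspace_iff.mp ((Submodule.mem_iInf _).mp h0 p)
  set μ : Fin m → Fin n → ℂ := fun a j => χf a (j, false) + Complex.I * χf a (j, true) with hμdef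
  have hdecomp : ∀ j, A j = H (j, false) + Complex.I • H (j, true) := by
    intro j
    show A j = (1/2 : ℂ) • (A j + star (A j))
        + Complex.I • ((Complex.I * (1/2 : ℂ)) • (star (A j) - A j))
    rw [smul_smul, show Complex.I * (Complex.I * (1/2 : ℂ)) = -(1/2 : ℂ) by
      rw [← mul_assoc, Complex.I_mul_I]; ring]
    module
  have hAeigE : ∀ a j, Matrix.toEuclideanLin (A j) (b a) = μ a j • b a := by
    intro a j
    rw [hdecomp j, map_add, LinearMap.add_apply, LinearEquiv.map_smul, LinearMap.smul_apply]
    rw [show Matrix.toEuclideanLin (H (j, false)) (b a) = T (j, false) (b a) from rfl,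
      show Matrix.toEuclideanLin (H (j, true)) (b a) = T (j, true) (b a) from rfl,
      heig a (j, false), heig a (j, true), smul_smul, ← add_smul]
  let v : Fin m → (Fin m → ℂ) := fun a => WithLp.equiv 2 (Fin m → ℂ) (b a)
  have hAv : ∀ a j, A j *ᵥ (v a) = μ a j • v a := by
    intro a j
    have h1 := congrArg (WithLp.equiv 2 (Fin m → ℂ)) (hAeigE a j)
    simpa [v] using h1
  let g0 : Matrix (Fin m) (Fin m) ℂ :=
    (EuclideanSpace.basisFun (Fin m) ℂ).toBasis.toMatrix b.toBasis
  have hg0 : g0 ∈ Matrix.unitaryGroup (Fin m) ℂ :=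
    (EuclideanSpace.basisFun (Fin m) ℂ).toMatrix_orthonormalBasis_mem_unitary b
  have hg0apply : ∀ i a, g0 i a = v a i := fun i a => rfl
  have hcol : ∀ j, A j * g0 = g0 * Matrix.diagonal (fun a => μ a j) := by
    intro j
    ext i a
    rw [Matrix.mul_diagonal]
    calc (A j * g0) i a = (A j *ᵥ v a) i := by
          rw [Matrix.mul_apply]; rfl
      _ = (μ a j • v a) i := by rw [hAv a j]
      _ = g0 i a * μ a j := by
          rw [Pi.smul_apply, smul_eq_mul, mul_comm]; rfl
  have hconj : ∀ j, star g0 * A j * g0 = Matrix.diagonal (fun a => μ a j) := by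
    intro j
    have h1 : star g0 * (A j * g0) = star g0 * (g0 * Matrix.diagonal (fun a => μ a j)) := by
      rw [hcol j]
    rw [← mul_assoc, ← mul_assoc, Matrix.mem_unitaryGroup_iff'.mp hg0, one_mul] at h1
    exact h1
  have hA_eq : ∀ j, A j = g0 * Matrix.diagonal (fun a => μ a j) * star g0 := by
    intro j
    calc A j = (g0 * star g0) * A j * (g0 * star g0) := by
          rw [Matrix.mem_unitaryGroup_iff.mp hg0, one_mul, mul_one]
      _ = g0 * (star g0 * A j * g0) * star g0 := by noncomm_ring
      _ = g0 * Matrix.diagonal (fun a => μ a j) * star g0 := by rw [hconj j]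
  have hdiagmem : ∀ j, Matrix.diagonal (fun a => μ a j) ∈ Matrix.unitaryGroup (Fin m) ℂ := by
    intro j
    rw [← hconj j]
    exact mul_mem (mul_mem (Unitary.star_mem hg0) (hAmem j)) hg0
  have hnorm : ∀ a j, ‖μ a j‖ = 1 := fun a j => entry_norm_one_of_diagonal_mem (hdiagmem j) a
  refine ⟨fun a j => ⟨μ a j, ?_⟩, ⟨⟨g0, hg0⟩, fun j => ?_⟩⟩
  · show μ a j ∈ Metric.sphere (0 : ℂ) 1
    rw [mem_sphere_zero_iff_norm]
    exact hnorm a j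
  · apply Subtype.ext
    show A j = g0 * Matrix.diagonal (fun i => μ i j) * star g0
    exact hA_eq j

end Surj

section Topology

variable {n m : ℕ}

set_option maxHeartbeats 1000000 in
lemma isCompact_unitaryGroup :
    IsCompact {A : Matrix (Fin m) (Fin m) ℂ | A ∈ Matrix.unitaryGroup (Fin m) ℂ} := by
  have hsub : {A : Matrix (Fin m) (Fin m) ℂ | A ∈ Matrix.unitaryGroup (Fin m) ℂ} ⊆
      Set.univ.pi (fun _ : Fin m => Set.univ.pi fun _ : Fin m => Metric.closedBall (0 : ℂ) 1) := by
    intro A hA i _ j _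
    have h1 : A * star A = 1 := Matrix.mem_unitaryGroup_iff.mp hA
    have h2 := congrFun (congrFun h1 i) i
    rw [Matrix.mul_apply, Matrix.one_apply_eq] at h2
    have h3 : (↑(∑ k, Complex.normSq (A i k)) : ℂ) = 1 := by
      push_cast
      rw [← h2]
      refine Finset.sum_congr rfl fun k _ => ?_
      rw [Matrix.star_apply, Complex.star_def, Complex.mul_conj]
    have h4 : ∑ k, Complex.normSq (A i k) = 1 := by exact_mod_cast h3
    have h5 : Complex.normSq (A i j) ≤ 1 := by
      rw [← h4]
      exact Finset.single_le_sum (fun k _ => Complex.normSq_nonneg _) (Finset.mem_univ j)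
    have h6 : ‖A i j‖ ^ 2 ≤ 1 := by
      rw [Complex.sq_norm]
      exact h5
    rw [Metric.mem_closedBall, dist_zero_right]
    nlinarith [norm_nonneg (A i j)]
  have hK : IsCompact (Set.univ.pi
      (fun _ : Fin m => Set.univ.pi fun _ : Fin m => Metric.closedBall (0 : ℂ) 1)) :=
    isCompact_univ_pi fun _ => isCompact_univ_pi fun _ => isCompact_closedBall 0 1
  have hclosed : IsClosed {A : Matrix (Fin m) (Fin m) ℂ | A ∈ Matrix.unitaryGroup (Fin m) ℂ} := by
    have heq : {A : Matrix (Fin m) (Fin m) ℂ | A ∈ Matrix.unitaryGroup (Fin m) ℂ}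
        = (fun A : Matrix (Fin m) (Fin m) ℂ => star A * A) ⁻¹' {1}
          ∩ (fun A : Matrix (Fin m) (Fin m) ℂ => A * star A) ⁻¹' {1} := by
      ext A
      constructor
      · exact fun hA => ⟨hA.1, hA.2⟩
      · exact fun hA => ⟨hA.1, hA.2⟩
    rw [heq]
    exact ((isClosed_singleton.preimage
        ((continuous_id.star).matrix_mul continuous_id)).inter
      (isClosed_singleton.preimage (continuous_id.matrix_mul (continuous_id.star))))
  exact hK.of_isClosed_subset hclosed hsub

instance : CompactSpace (Matrix.unitaryGroup (Fin m) ℂ) :=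
  isCompact_iff_compactSpace.mp isCompact_unitaryGroup

/-- Conjugation of a commuting tuple by a group element. -/
def conjAct' {n : ℕ} {G : Type*} [Group G] (g : G) (x : CommTuples n G) : CommTuples n G :=
  ⟨fun j => g * x.1 j * g⁻¹, fun j k => by
    have h := x.2 j k
    calc (g * x.1 j * g⁻¹) * (g * x.1 k * g⁻¹) = g * (x.1 j * x.1 k) * g⁻¹ := by group
      _ = g * (x.1 k * x.1 j) * g⁻¹ := by rw [h]
      _ = (g * x.1 k * g⁻¹) * (g * x.1 j * g⁻¹) := by group⟩

lemma continuous_entry (i : Fin m) (j : Fin n) :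
    Continuous fun lam : Fin m → Fin n → Circle => (lam i j : ℂ) :=
  continuous_subtype_val.comp ((continuous_apply j).comp (continuous_apply i))

lemma continuous_diagTuple : Continuous (diagTuple n m) := by
  refine continuous_induced_rng.2 ?_
  refine continuous_pi fun j => ?_
  refine continuous_induced_rng.2 ?_
  show Continuous fun lam : Fin m → Fin n → Circle =>
    Matrix.diagonal (fun i => (lam i j : ℂ))
  refine continuous_matrix fun i i' => ?_
  by_cases h : i = i'
  · subst h
    simp only [Matrix.diagonal_apply_eq]
    exact continuous_entry i j
  · simp only [Matrix.diagonal_apply_ne _ h]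
    exact continuous_const

lemma continuous_conjDiag :
    Continuous (fun p : (Fin m → Fin n → Circle) × Matrix.unitaryGroup (Fin m) ℂ =>
      conjAct' p.2 (diagTuple n m p.1)) := by
  refine continuous_induced_rng.2 ?_
  refine continuous_pi fun j => ?_
  refine continuous_induced_rng.2 ?_
  show Continuous fun p : (Fin m → Fin n → Circle) × Matrix.unitaryGroup (Fin m) ℂ =>
    (p.2 : Matrix (Fin m) (Fin m) ℂ) * Matrix.diagonal (fun i => (p.1 i j : ℂ))
      * star (p.2 : Matrix (Fin m) (Fin m) ℂ)
  refine Continuous.matrix_mul (Continuous.matrix_mul ?_ ?_) ?_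
  · exact continuous_subtype_val.comp continuous_snd
  · refine continuous_matrix fun i i' => ?_
    by_cases h : i = i'
    · subst h
      simp only [Matrix.diagonal_apply_eq]
      exact (continuous_entry i j).comp continuous_fst
    · simp only [Matrix.diagonal_apply_ne _ h]
      exact continuous_const
  · exact (continuous_subtype_val.comp continuous_snd).star

end Topology

end SPTAux

open SPTAux in
/-- The map `T^m → C_n(U(m))` sending `(λ₁, …, λ_m)` to the commuting tuple of diagonal
matrices `(D₁, …, Dₙ)`, `D_j = diag(λ₁⁽ʲ⁾, …, λ_m⁽ʲ⁾)`, descends to a homeomorphism from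
the symmetric product `T^m/Σ_m` onto the representation space
`Rep_n(U(m)) = C_n(U(m))/U(m)`. -/
theorem symmetricProduct_torus_homeomorph_repSpace_unitary (n m : ℕ)
    (hn : 1 ≤ n) (hm : 1 ≤ m) :
    ∃ h : Quot (symRel n m) ≃ₜ RepSpace n (Matrix.unitaryGroup (Fin m) ℂ),
      ∀ lam : Fin m → Fin n → Circle,
        h (Quot.mk (symRel n m) lam) = Quot.mk (repRel n _) (diagTuple n m lam) := by
  classical
  have hrepEq := repRel_equivalence n (Matrix.unitaryGroup (Fin m) ℂ)
  haveI : T2Space (CommTuples n (Matrix.unitaryGroup (Fin m) ℂ)) :=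
    inferInstanceAs (T2Space {g : Fin n → Matrix.unitaryGroup (Fin m) ℂ //
      ∀ i j, g i * g j = g j * g i})
  let f0 : (Fin m → Fin n → Circle) → RepSpace n (Matrix.unitaryGroup (Fin m) ℂ) :=
    fun lam => Quot.mk _ (diagTuple n m lam)
  have hresp : ∀ a b, symRel n m a b → f0 a = f0 b :=
    fun a b h => Quot.sound (diagTuple_rep_of_symRel h)
  let f : Quot (symRel n m) → RepSpace n (Matrix.unitaryGroup (Fin m) ℂ) := Quot.lift f0 hresp
  have hsurj : Function.Surjective f := by
    intro y
    induction y using Quot.ind with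
    | _ x =>
      obtain ⟨lam, hr⟩ := exists_diag_rep x
      exact ⟨Quot.mk _ lam, Quot.sound hr⟩
  have hinj : Function.Injective f := by
    intro p q
    induction p using Quot.ind with
    | _ a =>
      induction q using Quot.ind with
      | _ b =>
        intro h
        have h1 : repRel n (Matrix.unitaryGroup (Fin m) ℂ) (diagTuple n m a) (diagTuple n m b) :=
          (hrepEq.eqvGen_iff).mp (Quot.eqvGen_exact h)
        exact Quot.sound (symRel_of_diagTuple_rep h1)
  have hcont : Continuous f :=
    continuous_quot_lift _ (continuous_quot_mk.comp continuous_diagTuple)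
  have hclosed : IsClosedMap f := by
    intro C hC
    refine (isQuotientMap_quot_mk
      (r := repRel n (Matrix.unitaryGroup (Fin m) ℂ))).isClosed_preimage.mp ?_
    have key : Quot.mk (repRel n (Matrix.unitaryGroup (Fin m) ℂ)) ⁻¹' (f '' C)
        = (fun p : (Fin m → Fin n → Circle) × Matrix.unitaryGroup (Fin m) ℂ =>
            conjAct' p.2 (diagTuple n m p.1)) ''
          ((Quot.mk (symRel n m) ⁻¹' C) ×ˢ (Set.univ : Set (Matrix.unitaryGroup (Fin m) ℂ))) := by
      ext x
      constructor
      · rintro ⟨c, hcC, hfc⟩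
        obtain ⟨lam, rfl⟩ := Quot.exists_rep c
        have h1 : repRel n (Matrix.unitaryGroup (Fin m) ℂ) (diagTuple n m lam) x :=
          (hrepEq.eqvGen_iff).mp (Quot.eqvGen_exact hfc)
        obtain ⟨g, hg⟩ := h1
        refine ⟨(lam, g), ⟨hcC, Set.mem_univ _⟩, ?_⟩
        apply Subtype.ext
        funext j
        exact (hg j).symm
      · rintro ⟨⟨lam, g⟩, ⟨hlam, -⟩, rfl⟩
        refine ⟨Quot.mk _ lam, hlam, ?_⟩
        exact Quot.sound ⟨g, fun j => rfl⟩
    erw [key]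
    have hK : IsCompact ((Quot.mk (symRel n m) ⁻¹' C)
        ×ˢ (Set.univ : Set (Matrix.unitaryGroup (Fin m) ℂ))) :=
      ((hC.preimage continuous_quot_mk).isCompact).prod isCompact_univ
    exact (hK.image continuous_conjDiag).isClosed
  have hopen : IsOpenMap f := by
    intro U hU
    have himg : f '' U = (f '' Uᶜ)ᶜ := by
      rw [Set.image_compl_eq ⟨hinj, hsurj⟩, compl_compl]
    rw [himg]
    exact isOpen_compl_iff.mpr (hclosed _ hU.isClosed_compl)
  exact ⟨Equiv.toHomeomorphOfContinuousOpen (Equiv.ofBijective f ⟨hinj, hsurj⟩) hcont hopen,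
    fun lam => rfl⟩
end

section
/- Let R be a commutative ring, v ∈ R, and (y_i)_{i ≥ 0} a sequence in R. Write y(u) = Σ_{i≥0} y_i u^i. Suppose that in the formal power series ring R[[s,t]] the identity y(s)·y(t) = y(s + t + v·s·t) holds, where y(s + t + v·s·t) denotes the substitution of the power series s + t + v·s·t (which has zero constant term) into y. Then for all k, l ≥ 0, y_k · y_l = Σ_{i = max(k,l)}^{k+l} (i! / ((i−k)!·(i−l)!·(k+l−i)!)) · v^{k+l−i} · y_i. -/
/-- Substitution of a formal power series `g ∈ R[[s,t]]` with zero constant term into the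
one-variable formal power series `y(u) = Σᵢ yᵢ uⁱ`, i.e. the series `Σᵢ yᵢ · gⁱ`.
Its `d`-th coefficient is `Σ_{i ≤ |d|} yᵢ · (coefficient of d in gⁱ)`; since `g` has zero
constant term, the `d`-th coefficient of `gⁱ` vanishes for `i > |d| = d 0 + d 1`, so the
finite sum below is the full sum `Σᵢ yᵢ · (coefficient of d in gⁱ)`. -/
noncomputable def substInto {R : Type*} [CommRing R] (y : ℕ → R)
    (g : MvPowerSeries (Fin 2) R) : MvPowerSeries (Fin 2) R :=
  fun d => ∑ i ∈ Finset.range (d 0 + d 1 + 1), y i * MvPowerSeries.coeff (R := R) d (g ^ i)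

section Helpers
open MvPowerSeries Finsupp Finset
variable {R : Type*} [CommRing R]


lemma pair_apply0 (a b : ℕ) : (single (0:Fin 2) a + single 1 b : Fin 2 →₀ ℕ) 0 = a := by simp
lemma pair_apply1 (a b : ℕ) : (single (0:Fin 2) a + single 1 b : Fin 2 →₀ ℕ) 1 = b := by simp

lemma pair_eq_iff (a b a' b' : ℕ) :
    (single (0:Fin 2) a + single 1 b : Fin 2 →₀ ℕ) = single 0 a' + single 1 b' ↔ a = a' ∧ b = b' := by
  constructor
  · intro h
    refine ⟨?_, ?_⟩
    · have h0 := congrFun (congrArg (DFunLike.coe) h) 0; simpa using h0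
    · have h1 := congrFun (congrArg (DFunLike.coe) h) 1; simpa using h1
  · rintro ⟨rfl, rfl⟩; rfl

lemma eq_pair_of (d : Fin 2 →₀ ℕ) : d = single 0 (d 0) + single 1 (d 1) := by
  ext x
  fin_cases x <;> simp

lemma coeff_substInto (y : ℕ → R) (g : MvPowerSeries (Fin 2) R) (d : Fin 2 →₀ ℕ) :
    coeff (R := R) d (substInto y g) = ∑ i ∈ Finset.range (d 0 + d 1 + 1), y i * coeff (R := R) d (g ^ i) :=
  rfl

lemma coeff_substInto_X0 (y : ℕ → R) (d : Fin 2 →₀ ℕ) :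
    coeff (R := R) d (substInto y (X 0)) = if d 1 = 0 then y (d 0) else 0 := by
  rw [coeff_substInto]
  split_ifs with h1
  · rw [Finset.sum_eq_single (d 0)]
    · rw [coeff_X_pow, if_pos, mul_one]
      ext x; fin_cases x <;> simp [h1]
    · intro i _ hne
      rw [coeff_X_pow, if_neg, mul_zero]
      intro hd
      have h0 := congrFun (congrArg DFunLike.coe hd) 0
      exact hne (by simpa using h0.symm)
    · intro hmem; exact absurd (Finset.mem_range.mpr (by omega)) hmem
  · apply Finset.sum_eq_zero
    intro i _
    rw [coeff_X_pow, if_neg, mul_zero]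
    intro hd
    exact h1 (by simpa using congrFun (congrArg DFunLike.coe hd) 1)

lemma coeff_substInto_X1 (y : ℕ → R) (d : Fin 2 →₀ ℕ) :
    coeff (R := R) d (substInto y (X 1)) = if d 0 = 0 then y (d 1) else 0 := by
  rw [coeff_substInto]
  split_ifs with h1
  · rw [Finset.sum_eq_single (d 1)]
    · rw [coeff_X_pow, if_pos, mul_one]
      ext x; fin_cases x <;> simp [h1]
    · intro i _ hne
      rw [coeff_X_pow, if_neg, mul_zero]
      intro hd
      have h0 := congrFun (congrArg DFunLike.coe hd) 1
      exact hne (by simpa using h0.symm)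
    · intro hmem; exact absurd (Finset.mem_range.mpr (by omega)) hmem
  · apply Finset.sum_eq_zero
    intro i _
    rw [coeff_X_pow, if_neg, mul_zero]
    intro hd
    exact h1 (by simpa using congrFun (congrArg DFunLike.coe hd) 0)

lemma coeff_lhs (y : ℕ → R) (k l : ℕ) :
    coeff (R := R) (single 0 k + single 1 l) (substInto y (X 0) * substInto y (X 1)) = y k * y l := by
  rw [coeff_mul]
  have key := Finset.sum_eq_single_of_mem
    (f := fun p : (Fin 2 →₀ ℕ) × (Fin 2 →₀ ℕ) =>
      coeff (R := R) p.1 (substInto y (X 0)) * coeff (R := R) p.2 (substInto y (X 1)))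
    (s := Finset.HasAntidiagonal.antidiagonal (single (0:Fin 2) k + single 1 l))
    ((single (0:Fin 2) k, single (1:Fin 2) l)) (Finset.HasAntidiagonal.mem_antidiagonal.mpr rfl) ?_
  · rw [key]
    simp only [coeff_substInto_X0, coeff_substInto_X1]
    simp
  · rintro ⟨p, q⟩ hmem hne
    rw [Finset.HasAntidiagonal.mem_antidiagonal] at hmem
    simp only [coeff_substInto_X0, coeff_substInto_X1]
    by_cases hp : p 1 = 0
    · by_cases hq : q 0 = 0
      · exfalso
        apply hne
        have h0 := congrFun (congrArg DFunLike.coe hmem) 0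
        have h1 := congrFun (congrArg DFunLike.coe hmem) 1
        simp [hq] at h0
        simp [hp] at h1
        have hpe : p = single (0:Fin 2) k := by
          ext x; fin_cases x <;> simp [hp, h0]
        have hqe : q = single (1:Fin 2) l := by
          ext x; fin_cases x <;> simp [hq, h1]
        simp [hpe, hqe]
      · rw [if_neg hq, mul_zero]
    · rw [if_neg hp, zero_mul]

lemma term_eq (a b : ℕ) (r : R) :
    (C (σ := Fin 2) (R := R) r) * (X (0:Fin 2))^a * (X 1)^b = monomial (R := R) (single 0 a + single 1 b) r := by
  rw [X_pow_eq, X_pow_eq, ← monomial_zero_eq_C_apply, monomial_mul_monomial,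
    monomial_mul_monomial, mul_one, mul_one, zero_add]

lemma g_pow (v : R) (i : ℕ) :
    (X 0 + X 1 + C (σ := Fin 2) (R := R) v * X 0 * X 1 : MvPowerSeries (Fin 2) R)^i =
    ∑ c ∈ Finset.range (i+1), ∑ j ∈ Finset.range (c+1),
      monomial (R := R) (single 0 (j + (i-c)) + single 1 ((c-j) + (i-c)))
        ((Nat.choose i c * Nat.choose c j : ℕ) * v^(i-c)) := by
  rw [add_pow]
  refine Finset.sum_congr rfl ?_
  intro c hc
  rw [add_pow, Finset.sum_mul, Finset.sum_mul]
  refine Finset.sum_congr rfl ?_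
  intro j hj
  have h1 : (C (σ := Fin 2) (R := R) v * X 0 * X 1) ^ (i - c) =
      C (σ := Fin 2) (R := R) (v ^ (i-c)) * (X (0:Fin 2)) ^ (i-c) * (X (1:Fin 2)) ^ (i-c) := by
    rw [mul_pow, mul_pow, map_pow]
  rw [h1]
  have h2 : (X (0:Fin 2) : MvPowerSeries (Fin 2) R) ^ j * X 1 ^ (c - j) * (c.choose j : MvPowerSeries (Fin 2) R) *
      (C (σ := Fin 2) (R := R) (v ^ (i-c)) * X 0 ^ (i-c) * X 1 ^ (i-c)) * (i.choose c : MvPowerSeries (Fin 2) R) =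
      ((i.choose c : MvPowerSeries (Fin 2) R) * (c.choose j : MvPowerSeries (Fin 2) R)) *
      (C (σ := Fin 2) (R := R) (v ^ (i-c)) * ((X (0:Fin 2)) ^ j * X 0 ^ (i-c)) * ((X (1:Fin 2)) ^ (c-j) * X 1 ^ (i-c))) := by
    ring
  rw [h2, ← pow_add, ← pow_add, term_eq]
  have h3 : ((i.choose c : MvPowerSeries (Fin 2) R) * (c.choose j : MvPowerSeries (Fin 2) R)) =
      C (σ := Fin 2) (R := R) ((i.choose c * c.choose j : ℕ) : R) := by
    push_cast [← monomial_zero_eq_C_apply]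
    norm_cast
  rw [h3, ← monomial_zero_eq_C_apply, monomial_mul_monomial, zero_add]

lemma nat_multinomial (k l i : ℕ) (hk : k ≤ i) (hl : l ≤ i) (hi : i ≤ k + l) :
    Nat.choose i ((i-k)+(i-l)) * Nat.choose ((i-k)+(i-l)) (i-l) =
    i.factorial / ((i-k).factorial * (i-l).factorial * (k+l-i).factorial) := by
  have hc : (i-k)+(i-l) ≤ i := by omega
  have e1 := Nat.choose_mul_factorial_mul_factorial hc
  have e2 := Nat.choose_mul_factorial_mul_factorial (Nat.le_add_left (i-l) (i-k))
  have h3 : (i-k)+(i-l) - (i-l) = i - k := by omega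
  have h4 : i - ((i-k)+(i-l)) = k + l - i := by omega
  rw [h3] at e2
  rw [h4] at e1
  symm
  apply Nat.div_eq_of_eq_mul_left
  · positivity
  rw [← e1, ← e2]
  ring

lemma coeff_g_pow (v : R) (k l i : ℕ) :
    coeff (R := R) (single 0 k + single 1 l)
      ((X 0 + X 1 + C (σ := Fin 2) (R := R) v * X 0 * X 1 : MvPowerSeries (Fin 2) R)^i) =
    if max k l ≤ i ∧ i ≤ k + l then
      ((i.factorial / ((i-k).factorial * (i-l).factorial * (k+l-i).factorial) : ℕ) : R) * v^(k+l-i)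
    else 0 := by
  rw [g_pow, map_sum]
  simp_rw [map_sum, coeff_monomial]
  by_cases hcond : max k l ≤ i ∧ i ≤ k + l
  · obtain ⟨hm, hi⟩ := hcond
    have hk : k ≤ i := le_trans (le_max_left k l) hm
    have hl : l ≤ i := le_trans (le_max_right k l) hm
    rw [if_pos ⟨hm, hi⟩]
    rw [Finset.sum_eq_single ((i-k)+(i-l))]
    · rw [Finset.sum_eq_single (i-l)]
      · rw [if_pos]
        · have hA : i - ((i-k)+(i-l)) = k + l - i := by omega
          rw [hA, nat_multinomial k l i hk hl hi]
        · rw [pair_eq_iff]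
          omega
      · intro j hj hne
        rw [Finset.mem_range] at hj
        rw [if_neg]
        intro heq
        obtain ⟨h1, h2⟩ := (pair_eq_iff _ _ _ _).mp heq
        omega
      · intro hmem
        exact absurd (Finset.mem_range.mpr (by omega)) hmem
    · intro c hc hne
      rw [Finset.mem_range] at hc
      apply Finset.sum_eq_zero
      intro j hj
      rw [Finset.mem_range] at hj
      rw [if_neg]
      intro heq
      obtain ⟨h1, h2⟩ := (pair_eq_iff _ _ _ _).mp heq
      omega
    · intro hmem
      exact absurd (Finset.mem_range.mpr (by omega)) hmem
  · rw [if_neg hcond]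
    apply Finset.sum_eq_zero
    intro c hc
    rw [Finset.mem_range] at hc
    apply Finset.sum_eq_zero
    intro j hj
    rw [Finset.mem_range] at hj
    rw [if_neg]
    intro heq
    obtain ⟨h1, h2⟩ := (pair_eq_iff _ _ _ _).mp heq
    omega

end Helpers

/-- If a sequence `(yᵢ)` in a commutative ring `R` satisfies the formal power series
identity `y(s) · y(t) = y(s + t + v·s·t)` in `R[[s,t]]`, then
`y_k · y_l = Σ_{i = max(k,l)}^{k+l} (i! / ((i−k)!·(i−l)!·(k+l−i)!)) · v^{k+l−i} · yᵢ`
for all `k, l ≥ 0`. -/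
theorem mul_eq_sum_multinomial_of_power_series_identity
    (R : Type*) [CommRing R] (v : R) (y : ℕ → R)
    (h : substInto y (MvPowerSeries.X 0) * substInto y (MvPowerSeries.X 1) =
      substInto y (MvPowerSeries.X 0 + MvPowerSeries.X 1 +
        MvPowerSeries.C (σ := Fin 2) (R := R) v * MvPowerSeries.X 0 * MvPowerSeries.X 1)) :
    ∀ k l : ℕ, y k * y l = ∑ i ∈ Finset.Icc (max k l) (k + l),
      ((i.factorial / ((i - k).factorial * (i - l).factorial * (k + l - i).factorial) : ℕ) : R)
        * v ^ (k + l - i) * y i := by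
  intro k l
  classical
  have hc := congrArg (MvPowerSeries.coeff (R := R) (Finsupp.single 0 k + Finsupp.single 1 l)) h
  rw [coeff_lhs] at hc
  rw [coeff_substInto, pair_apply0, pair_apply1] at hc
  simp_rw [coeff_g_pow, mul_ite, mul_zero] at hc
  rw [← Finset.sum_filter] at hc
  have hfil : (Finset.range (k+l+1)).filter (fun i => max k l ≤ i ∧ i ≤ k + l) =
      Finset.Icc (max k l) (k+l) := by
    ext i
    simp only [Finset.mem_filter, Finset.mem_Icc, Finset.mem_range]
    omega
  rw [hfil] at hc
  rw [hc]
  exact Finset.sum_congr rfl (fun i _ => by ring)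
end
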